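/- arXiv:2001.00033 — 13 statements merged into one kernel-verified Lean document; each statement's English description precedes it below -/
import Mathlib

section
/- Let T : Matrix (Fin 4) (Fin 4) ℝ be symmetric and define the tensor X a b c d := ∑_{p,q} ε a b p q · T p c · T q d. Then: (i) for all a, b, c, d, ∑_{e,f} X a b e f · X e f c d = 2 · (det T) · (δ a c · δ b d − δ a d · δ b c); (ii) ∑_{a,b} X a b a b = 0; (iii) for all a, c, ∑_b X a b c b = 0. -/
/-- The Levi-Civita symbol on `Fin 4`: equals the sign of the permutation
`(0,1,2,3) ↦ (a,b,c,d)` when `(a,b,c,d)` is a permutation of `(0,1,2,3)`, and `0` otherwise. -/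
noncomputable def leviCivita (a b c d : Fin 4) : ℝ :=
  ((∑ σ : Equiv.Perm (Fin 4),
    if σ 0 = a ∧ σ 1 = b ∧ σ 2 = c ∧ σ 3 = d then (Equiv.Perm.sign σ : ℤ) else 0 : ℤ) : ℝ)

/-- The Kronecker delta on `Fin 4`. -/
def kronecker (a b : Fin 4) : ℝ := if a = b then 1 else 0

/-- Integer-valued version of the Levi-Civita symbol. -/
def lcZ (a b c d : Fin 4) : ℤ :=
  ∑ σ : Equiv.Perm (Fin 4),
    if σ 0 = a ∧ σ 1 = b ∧ σ 2 = c ∧ σ 3 = d then (Equiv.Perm.sign σ : ℤ) else 0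

/-- Closed form for the Levi-Civita symbol via the Vandermonde product. -/
def lcF (a b c d : Fin 4) : ℤ :=
  ((b:ℤ)-a)*((c:ℤ)-a)*((d:ℤ)-a)*((c:ℤ)-b)*((d:ℤ)-b)*((d:ℤ)-c)/12

theorem fin4_cases {P : Fin 4 → Prop} (h0 : P 0) (h1 : P 1) (h2 : P 2) (h3 : P 3) :
    ∀ i, P i := by
  intro i; fin_cases i <;> assumption

theorem lcZ_eq : ∀ a b c d, lcZ a b c d = lcF a b c d := by decide

theorem lc_val (a b c d : Fin 4) : leviCivita a b c d = (lcF a b c d : ℝ) := by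
  rw [show leviCivita a b c d = ((lcZ a b c d : ℤ) : ℝ) from rfl, lcZ_eq]

set_option maxHeartbeats 4000000 in
/-- For a symmetric `4 × 4` real matrix `T` and `X_{ab}^{cd} := ε_{abpq} T^{pc} T^{qd}`:
(i) `X_{ab}^{ef} X_{ef}^{cd} = 2 (det T)(δ_a^c δ_b^d − δ_a^d δ_b^c)`;
(ii) the full trace `X_{ab}^{ab}` vanishes; (iii) the partial trace `X_{ab}^{cb}` vanishes. -/
theorem gauss_tensor_properties
    (T : Matrix (Fin 4) (Fin 4) ℝ) (hT : ∀ p q, T p q = T q p)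
    (X : Fin 4 → Fin 4 → Fin 4 → Fin 4 → ℝ)
    (hX : ∀ a b c d, X a b c d = ∑ p, ∑ q, leviCivita a b p q * T p c * T q d) :
    (∀ a b c d, ∑ e, ∑ f, X a b e f * X e f c d
        = 2 * T.det * (kronecker a c * kronecker b d - kronecker a d * kronecker b c))
    ∧ (∑ a, ∑ b, X a b a b = 0)
    ∧ (∀ a c, ∑ b, X a b c b = 0) := by
  have h00 : ∀ c d, X 0 0 c d = 0 := by
    intro c d; rw [hX]
    simp only [Fin.sum_univ_four, lc_val, lcF]
    norm_num [show ((3:Fin 4):ℕ) = 3 from rfl, show ((2:Fin 4):ℕ) = 2 from rfl]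
    try ring
  have h01 : ∀ c d, X 0 1 c d = (T 2 c * T 3 d - T 3 c * T 2 d) := by
    intro c d; rw [hX]
    simp only [Fin.sum_univ_four, lc_val, lcF]
    norm_num [show ((3:Fin 4):ℕ) = 3 from rfl, show ((2:Fin 4):ℕ) = 2 from rfl]
    try ring
  have h02 : ∀ c d, X 0 2 c d = -(T 1 c * T 3 d - T 3 c * T 1 d) := by
    intro c d; rw [hX]
    simp only [Fin.sum_univ_four, lc_val, lcF]
    norm_num [show ((3:Fin 4):ℕ) = 3 from rfl, show ((2:Fin 4):ℕ) = 2 from rfl]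
    try ring
  have h03 : ∀ c d, X 0 3 c d = (T 1 c * T 2 d - T 2 c * T 1 d) := by
    intro c d; rw [hX]
    simp only [Fin.sum_univ_four, lc_val, lcF]
    norm_num [show ((3:Fin 4):ℕ) = 3 from rfl, show ((2:Fin 4):ℕ) = 2 from rfl]
    try ring
  have h10 : ∀ c d, X 1 0 c d = -(T 2 c * T 3 d - T 3 c * T 2 d) := by
    intro c d; rw [hX]
    simp only [Fin.sum_univ_four, lc_val, lcF]
    norm_num [show ((3:Fin 4):ℕ) = 3 from rfl, show ((2:Fin 4):ℕ) = 2 from rfl]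
    try ring
  have h11 : ∀ c d, X 1 1 c d = 0 := by
    intro c d; rw [hX]
    simp only [Fin.sum_univ_four, lc_val, lcF]
    norm_num [show ((3:Fin 4):ℕ) = 3 from rfl, show ((2:Fin 4):ℕ) = 2 from rfl]
    try ring
  have h12 : ∀ c d, X 1 2 c d = (T 0 c * T 3 d - T 3 c * T 0 d) := by
    intro c d; rw [hX]
    simp only [Fin.sum_univ_four, lc_val, lcF]
    norm_num [show ((3:Fin 4):ℕ) = 3 from rfl, show ((2:Fin 4):ℕ) = 2 from rfl]
    try ring
  have h13 : ∀ c d, X 1 3 c d = -(T 0 c * T 2 d - T 2 c * T 0 d) := by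
    intro c d; rw [hX]
    simp only [Fin.sum_univ_four, lc_val, lcF]
    norm_num [show ((3:Fin 4):ℕ) = 3 from rfl, show ((2:Fin 4):ℕ) = 2 from rfl]
    try ring
  have h20 : ∀ c d, X 2 0 c d = (T 1 c * T 3 d - T 3 c * T 1 d) := by
    intro c d; rw [hX]
    simp only [Fin.sum_univ_four, lc_val, lcF]
    norm_num [show ((3:Fin 4):ℕ) = 3 from rfl, show ((2:Fin 4):ℕ) = 2 from rfl]
    try ring
  have h21 : ∀ c d, X 2 1 c d = -(T 0 c * T 3 d - T 3 c * T 0 d) := by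
    intro c d; rw [hX]
    simp only [Fin.sum_univ_four, lc_val, lcF]
    norm_num [show ((3:Fin 4):ℕ) = 3 from rfl, show ((2:Fin 4):ℕ) = 2 from rfl]
    try ring
  have h22 : ∀ c d, X 2 2 c d = 0 := by
    intro c d; rw [hX]
    simp only [Fin.sum_univ_four, lc_val, lcF]
    norm_num [show ((3:Fin 4):ℕ) = 3 from rfl, show ((2:Fin 4):ℕ) = 2 from rfl]
    try ring
  have h23 : ∀ c d, X 2 3 c d = (T 0 c * T 1 d - T 1 c * T 0 d) := by
    intro c d; rw [hX]
    simp only [Fin.sum_univ_four, lc_val, lcF]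
    norm_num [show ((3:Fin 4):ℕ) = 3 from rfl, show ((2:Fin 4):ℕ) = 2 from rfl]
    try ring
  have h30 : ∀ c d, X 3 0 c d = -(T 1 c * T 2 d - T 2 c * T 1 d) := by
    intro c d; rw [hX]
    simp only [Fin.sum_univ_four, lc_val, lcF]
    norm_num [show ((3:Fin 4):ℕ) = 3 from rfl, show ((2:Fin 4):ℕ) = 2 from rfl]
    try ring
  have h31 : ∀ c d, X 3 1 c d = (T 0 c * T 2 d - T 2 c * T 0 d) := by
    intro c d; rw [hX]
    simp only [Fin.sum_univ_four, lc_val, lcF]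
    norm_num [show ((3:Fin 4):ℕ) = 3 from rfl, show ((2:Fin 4):ℕ) = 2 from rfl]
    try ring
  have h32 : ∀ c d, X 3 2 c d = -(T 0 c * T 1 d - T 1 c * T 0 d) := by
    intro c d; rw [hX]
    simp only [Fin.sum_univ_four, lc_val, lcF]
    norm_num [show ((3:Fin 4):ℕ) = 3 from rfl, show ((2:Fin 4):ℕ) = 2 from rfl]
    try ring
  have h33 : ∀ c d, X 3 3 c d = 0 := by
    intro c d; rw [hX]
    simp only [Fin.sum_univ_four, lc_val, lcF]
    norm_num [show ((3:Fin 4):ℕ) = 3 from rfl, show ((2:Fin 4):ℕ) = 2 from rfl]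
    try ring
  have hdet : T.det = T 0 0*T 1 1*T 2 2*T 3 3 - T 0 0*T 1 1*T 2 3*T 3 2 - T 0 0*T 1 2*T 2 1*T 3 3 + T 0 0*T 1 2*T 2 3*T 3 1 + T 0 0*T 1 3*T 2 1*T 3 2 - T 0 0*T 1 3*T 2 2*T 3 1 - T 0 1*T 1 0*T 2 2*T 3 3 + T 0 1*T 1 0*T 2 3*T 3 2 + T 0 1*T 1 2*T 2 0*T 3 3 - T 0 1*T 1 2*T 2 3*T 3 0 - T 0 1*T 1 3*T 2 0*T 3 2 + T 0 1*T 1 3*T 2 2*T 3 0 + T 0 2*T 1 0*T 2 1*T 3 3 - T 0 2*T 1 0*T 2 3*T 3 1 - T 0 2*T 1 1*T 2 0*T 3 3 + T 0 2*T 1 1*T 2 3*T 3 0 + T 0 2*T 1 3*T 2 0*T 3 1 - T 0 2*T 1 3*T 2 1*T 3 0 - T 0 3*T 1 0*T 2 1*T 3 2 + T 0 3*T 1 0*T 2 2*T 3 1 + T 0 3*T 1 1*T 2 0*T 3 2 - T 0 3*T 1 1*T 2 2*T 3 0 - T 0 3*T 1 2*T 2 0*T 3 1 + T 0 3*T 1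 2*T 2 1*T 3 0 := by
    simp [Matrix.det_succ_row_zero, Fin.sum_univ_succ, show (Fin.succ 2 : Fin 4) = 3 from rfl, show ((2:Fin 4).succAbove 2) = 3 from rfl, show ((1:Fin 4).succAbove 2) = 3 from rfl, show (Fin.castSucc 2 : Fin 4) = 2 from rfl, show ((3:Fin 4).succAbove 2) = 2 from rfl]
    ring
  refine ⟨?_, ?_, ?_⟩
  · refine fin4_cases ?_ ?_ ?_ ?_ <;> refine fin4_cases ?_ ?_ ?_ ?_ <;>
      simp only [Fin.sum_univ_four, h00, h01, h02, h03, h10, h11, h12, h13,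
        h20, h21, h22, h23, h30, h31, h32, h33] <;>
    refine fin4_cases ?_ ?_ ?_ ?_ <;> refine fin4_cases ?_ ?_ ?_ ?_ <;>
      simp only [show kronecker 0 0 = (1:ℝ) from rfl, show kronecker 0 1 = (0:ℝ) from rfl, show kronecker 0 2 = (0:ℝ) from rfl, show kronecker 0 3 = (0:ℝ) from rfl, show kronecker 1 0 = (0:ℝ) from rfl, show kronecker 1 1 = (1:ℝ) from rfl, show kronecker 1 2 = (0:ℝ) from rfl, show kronecker 1 3 = (0:ℝ) from rfl, show kronecker 2 0 = (0:ℝ) from rfl, show kronecker 2 1 = (0:ℝ) from rfl, show kronecker 2 2 = (1:ℝ) from rfl, show kronecker 2 3 = (0:ℝ) from rfl, show kronecker 3 0 = (0:ℝ) from rfl, show kronecker 3 1 = (0:ℝ) from rfl, show kronecker 3 2 = (0:ℝ) from rfl, show kronecker 3 3 = (1:ℝ) from rfl, hdet, hT 1 0, hT 2 0, hT 2 1, hT 3 0, hT 3 1, hT 3 2] <;>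
      ring
  · simp only [Fin.sum_univ_four, h00, h01, h02, h03, h10, h11, h12, h13,
      h20, h21, h22, h23, h30, h31, h32, h33, hT 1 0, hT 2 0, hT 2 1, hT 3 0, hT 3 1, hT 3 2]
    ring
  · refine fin4_cases ?_ ?_ ?_ ?_ <;> refine fin4_cases ?_ ?_ ?_ ?_ <;>
      simp only [Fin.sum_univ_four, h00, h01, h02, h03, h10, h11, h12, h13,
        h20, h21, h22, h23, h30, h31, h32, h33, hT 1 0, hT 2 0, hT 2 1, hT 3 0, hT 3 1, hT 3 2] <;>
      try ring
end

section
/- Let n be a natural number and let X, Y be n×n real matrices such that X² = λ·1, Y² = μ·1 for some real numbers λ, μ, and trace X = 0 and trace Y = 0. Then trace((X+Y)³) = 0 and trace((X+Y)⁵) = 0. -/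
/-- If `X² = λ·1`, `Y² = μ·1` and `trace X = trace Y = 0` for `n × n` real matrices,
then `trace((X+Y)³) = 0` and `trace((X+Y)⁵) = 0`. -/
theorem trace_odd_powers_sum_of_sq_scalar
    (n : ℕ) (X Y : Matrix (Fin n) (Fin n) ℝ) (lam mu : ℝ)
    (hX2 : X ^ 2 = lam • (1 : Matrix (Fin n) (Fin n) ℝ))
    (hY2 : Y ^ 2 = mu • (1 : Matrix (Fin n) (Fin n) ℝ))
    (hXtr : X.trace = 0) (hYtr : Y.trace = 0) :
    ((X + Y) ^ 3).trace = 0 ∧ ((X + Y) ^ 5).trace = 0 := by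
  have hXX : X * X = lam • (1 : Matrix (Fin n) (Fin n) ℝ) := by rw [← sq]; exact hX2
  have hYY : Y * Y = mu • (1 : Matrix (Fin n) (Fin n) ℝ) := by rw [← sq]; exact hY2
  have hAXX : ∀ A : Matrix (Fin n) (Fin n) ℝ, A * X * X = lam • A := by
    intro A; rw [mul_assoc, hXX]; simp
  have hAYY : ∀ A : Matrix (Fin n) (Fin n) ℝ, A * Y * Y = mu • A := by
    intro A; rw [mul_assoc, hYY]; simp
  have tXYX : (X * Y * X).trace = 0 := by
    rw [Matrix.trace_mul_cycle, hXX]; simp [hYtr]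
  have tYXY : (Y * X * Y).trace = 0 := by
    rw [Matrix.trace_mul_cycle, hYY]; simp [hXtr]
  have tXYXYX : (X * Y * X * Y * X).trace = 0 := by
    rw [Matrix.trace_mul_comm]
    have : X * (X * Y * X * Y) = X * X * Y * X * Y := by noncomm_ring
    rw [this, hXX]
    simp [tYXY]
  have tYXYXY : (Y * X * Y * X * Y).trace = 0 := by
    rw [Matrix.trace_mul_comm]
    have : Y * (Y * X * Y * X) = Y * Y * X * Y * X := by noncomm_ring
    rw [this, hYY]
    simp [tXYX]
  constructor <;>
  · simp only [pow_succ, pow_zero, one_mul, add_mul, mul_add, Matrix.trace_add]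
    simp [hXX, hYY, hAXX, hAYY, Matrix.trace_smul, hXtr, hYtr, tXYX, tYXY, tXYXYX, tYXYXY,
      smul_mul_assoc, mul_smul_comm]
end

section
/- Let P be a 6×6 real matrix with trace P = 0, trace (P³) = 0 and trace (P⁵) = 0. Then trace (P^(2k+1)) = 0 for every natural number k. -/
open Multiset Polynomial Finset Set Module DirectSum


open MvPolynomial in

lemma esymm_odd_vanish (lam : Fin 6 → ℂ)
    (h1 : ∑ i, lam i ^ 1 = 0) (h3 : ∑ i, lam i ^ 3 = 0) (h5 : ∑ i, lam i ^ 5 = 0) :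
    (Finset.univ.val.map lam).esymm 1 = 0 ∧ (Finset.univ.val.map lam).esymm 3 = 0 ∧
      (Finset.univ.val.map lam).esymm 5 = 0 := by
  classical
  set φ := MvPolynomial.aeval (R := ℂ) lam with hφ
  have hP : ∀ k, φ (psum (Fin 6) ℂ k) = ∑ i, lam i ^ k := by
    intro k; simp [psum, hφ]
  have hE : ∀ k, φ (esymm (Fin 6) ℂ k) = (Finset.univ.val.map lam).esymm k := by
    intro k; exact aeval_esymm_eq_multiset_esymm (Fin 6) ℂ k lam
  have newton : ∀ k, 0 < k → φ (psum (Fin 6) ℂ k) =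
      (-1) ^ (k + 1) * k * φ (esymm (Fin 6) ℂ k) -
      ∑ a ∈ Finset.HasAntidiagonal.antidiagonal k with a.1 ∈ Set.Ioo 0 k,
        (-1) ^ a.1 * φ (esymm (Fin 6) ℂ a.1) * φ (psum (Fin 6) ℂ a.2) := by
    intro k hk
    have := congrArg φ (psum_eq_mul_esymm_sub_sum (Fin 6) ℂ k hk)
    simpa [map_sub, map_mul, map_sum, map_pow] using this
  have had1 : (Finset.HasAntidiagonal.antidiagonal 1).filter (fun a => a.1 ∈ Set.Ioo 0 1) = ∅ := by
    simp only [Set.mem_Ioo]; decide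
  have had3 : (Finset.HasAntidiagonal.antidiagonal 3).filter (fun a => a.1 ∈ Set.Ioo 0 3) =
      {(1,2),(2,1)} := by
    simp only [Set.mem_Ioo]; decide
  have had5 : (Finset.HasAntidiagonal.antidiagonal 5).filter (fun a => a.1 ∈ Set.Ioo 0 5) =
      {(1,4),(2,3),(3,2),(4,1)} := by
    simp only [Set.mem_Ioo]; decide
  have n1 := newton 1 one_pos
  rw [had1] at n1
  have e1 : φ (esymm (Fin 6) ℂ 1) = 0 := by
    rw [hP] at n1; rw [h1] at n1; simpa using n1.symm
  have n3 := newton 3 (by norm_num)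
  rw [had3] at n3
  have e3 : φ (esymm (Fin 6) ℂ 3) = 0 := by
    rw [hP 3, h3] at n3
    rw [Finset.sum_insert (by decide), Finset.sum_singleton] at n3
    rw [hP 1, h1, e1] at n3
    simpa using n3
  have n5 := newton 5 (by norm_num)
  rw [had5] at n5
  have e5 : φ (esymm (Fin 6) ℂ 5) = 0 := by
    rw [hP 5, h5] at n5
    rw [Finset.sum_insert (by decide), Finset.sum_insert (by decide),
      Finset.sum_insert (by decide), Finset.sum_singleton] at n5
    rw [hP 3, h3, hP 1, h1, e1, e3] at n5
    simpa using n5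
  exact ⟨by rw [← hE]; exact e1, by rw [← hE]; exact e3, by rw [← hE]; exact e5⟩


lemma ofFn_get_cast {α : Type*} (l : List α) {n : ℕ} (h : n = l.length) :
    List.ofFn (fun i : Fin n => l.get (Fin.cast h i)) = l := by
  subst h
  simp [List.ofFn_get]

lemma multiset_odd_sum (Λ : Multiset ℂ) (hcard : Multiset.card Λ = 6)
    (hE1 : Λ.esymm 1 = 0) (hE3 : Λ.esymm 3 = 0) (hE5 : Λ.esymm 5 = 0) :
    ∀ n : ℕ, Odd n → (Λ.map (fun x => x ^ n)).sum = 0 := by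
  -- step 1: the product polynomial is even
  have hq : ((Λ.map (fun a => -a)).map (fun r => X + C r)).prod
      = (Λ.map (fun r => X + C r)).prod := by
    rw [Multiset.prod_X_add_C_eq_sum_esymm, Multiset.prod_X_add_C_eq_sum_esymm, Multiset.card_map, hcard]
    refine Finset.sum_congr rfl fun j hj => ?_
    rw [Multiset.esymm_neg]
    simp only [Finset.mem_range] at hj
    interval_cases j <;> simp [hE1, hE3, hE5] <;> norm_num
  -- step 2: roots invariance
  have hneg : Λ.map (fun a => -a) = Λ := by
    have l1 : (Λ.map (fun r => X + C r)).prod = ((Λ.map (fun a => -a)).map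
        (fun a => X - C a)).prod := by
      rw [Multiset.map_map]
      congr 1
      apply Multiset.map_congr rfl
      intro x _
      simp [sub_neg_eq_add]
    have l2 : ((Λ.map (fun a => -a)).map (fun r => X + C r)).prod =
        (Λ.map (fun a => X - C a)).prod := by
      rw [Multiset.map_map]
      apply congrArg
      apply Multiset.map_congr rfl
      intro x _
      simp [sub_eq_add_neg]
    have := congrArg Polynomial.roots (l2.symm.trans (hq.trans l1))
    rw [Polynomial.roots_multiset_prod_X_sub_C, Polynomial.roots_multiset_prod_X_sub_C] at this
    exact this.symm
  intro n hn
  have h2 : (Λ.map (fun x => x ^ n)).sum = -(Λ.map (fun x => x ^ n)).sum := by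
    conv_lhs => rw [← hneg, Multiset.map_map]
    rw [← Multiset.sum_map_neg']
    rw [Multiset.map_map]
    apply congrArg
    apply Multiset.map_congr rfl
    intro x _
    simp [hn.neg_pow]
  exact add_self_eq_zero.mp (by linear_combination h2)


lemma exists_eigen_multiset {V : Type*} [AddCommGroup V] [Module ℂ V] [FiniteDimensional ℂ V]
    (f : Module.End ℂ V) :
    ∃ Λ : Multiset ℂ, Multiset.card Λ = Module.finrank ℂ V ∧
      ∀ k : ℕ, LinearMap.trace ℂ V (f ^ k) = (Λ.map (fun x => x ^ k)).sum := by
  classical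
  set W := f.maxGenEigenspace with hW
  have hind := f.independent_maxGenEigenspace
  have htop := f.iSup_maxGenEigenspace_eq_top
  have hds : DirectSum.IsInternal W :=
    DirectSum.isInternal_submodule_of_iSupIndep_of_iSup_eq_top hind htop
  have hfin : {μ | W μ ≠ ⊥}.Finite := WellFoundedGT.finite_ne_bot_of_iSupIndep hind
  have hm1 : ∀ μ : ℂ, MapsTo f (W μ) (W μ) := fun μ =>
    f.mapsTo_maxGenEigenspace_of_comm rfl μ
  have hmt : ∀ (k : ℕ) (μ : ℂ), MapsTo (f ^ k) (W μ) (W μ) := fun k μ =>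
    f.mapsTo_maxGenEigenspace_of_comm ((Commute.refl f).pow_right k) μ
  -- trace of restriction of powers
  have key : ∀ (μ : ℂ) (k : ℕ), LinearMap.trace ℂ (W μ) ((f ^ k).restrict (hmt k μ)) =
      μ ^ k * (Module.finrank ℂ (W μ) : ℂ) := by
    intro μ k
    induction k with
    | zero =>
      have h0 : (f ^ 0).restrict (hmt 0 μ) = 1 := by
        ext x; simp [LinearMap.restrict_apply]
      rw [h0, LinearMap.trace_one]
      simp
    | succ k ih =>
      have hsplit : (f ^ (k + 1)).restrict (hmt (k + 1) μ) =
          ((f ^ k).restrict (hmt k μ)) ∘ₗ (f.restrict (hm1 μ)) := by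
        ext x
        simp [LinearMap.restrict_apply, pow_succ, Module.End.mul_apply, LinearMap.restrict_coe_apply]
        rfl
      have hnil : IsNilpotent ((f.restrict (hm1 μ)) - algebraMap ℂ (Module.End ℂ (W μ)) μ) := by
        have h2 : f.restrict (hm1 μ) - algebraMap ℂ (Module.End ℂ (W μ)) μ =
            (f - algebraMap ℂ (Module.End ℂ V) μ).restrict
              (Module.End.mapsTo_maxGenEigenspace_of_comm
                (Algebra.mul_sub_algebraMap_commutes f μ) μ) := by
          ext x
          simp [LinearMap.restrict_apply, LinearMap.restrict_coe_apply, Module.algebraMap_end_apply, LinearMap.sub_apply]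
          rfl
        rw [h2]
        exact f.isNilpotent_restrict_maxGenEigenspace_sub_algebraMap μ
      rw [hsplit, LinearMap.trace_comp_eq_mul_of_commute_of_isNilpotent μ
        (LinearMap.restrict_commute ((Commute.refl f).pow_left k) (hmt k μ) (hm1 μ)) hnil, ih]
      ring
  -- assemble the multiset
  set Λ : Multiset ℂ :=
    hfin.toFinset.val.bind (fun μ => Multiset.replicate (Module.finrank ℂ (W μ)) μ) with hΛ
  have htr : ∀ k : ℕ, LinearMap.trace ℂ V (f ^ k) = (Λ.map (fun x => x ^ k)).sum := by
    intro k
    rw [LinearMap.trace_eq_sum_trace_restrict' hds hfin (hmt k)]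
    rw [Multiset.map_bind, Multiset.sum_bind]
    rw [Finset.sum, Multiset.map_congr rfl]
    intro μ hμ
    rw [key μ k]
    simp [Multiset.map_replicate, Multiset.sum_replicate, mul_comm]
  refine ⟨Λ, ?_, htr⟩
  have h0 := htr 0
  rw [pow_zero, LinearMap.trace_one] at h0
  have h0' : (Λ.map (fun x => x ^ 0)).sum = (Multiset.card Λ : ℂ) := by
    simp [Multiset.map_congr rfl (fun x _ => pow_zero x)]
  rw [h0'] at h0
  exact_mod_cast h0.symm

/-- If a `6 × 6` real matrix `P` satisfies `trace P = trace P³ = trace P⁵ = 0`,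
then all odd power traces `trace P^(2k+1)` vanish. -/
theorem trace_all_odd_powers_vanish
    (P : Matrix (Fin 6) (Fin 6) ℝ)
    (h1 : P.trace = 0) (h3 : (P ^ 3).trace = 0) (h5 : (P ^ 5).trace = 0) :
    ∀ k : ℕ, (P ^ (2 * k + 1)).trace = 0 := by
  classical
  set Q : Matrix (Fin 6) (Fin 6) ℂ := (algebraMap ℝ ℂ).mapMatrix P with hQ
  set f : Module.End ℂ (Fin 6 → ℂ) := Matrix.toLinAlgEquiv' Q with hf
  have htrace : ∀ n : ℕ, LinearMap.trace ℂ (Fin 6 → ℂ) (f ^ n) = ((P ^ n).trace : ℂ) := by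
    intro n
    have h1' : f ^ n = Matrix.toLinAlgEquiv' (Q ^ n) := by rw [hf, map_pow]
    have h2' : Q ^ n = ((algebraMap ℝ ℂ).mapMatrix (P ^ n)) := by rw [hQ, map_pow]
    rw [h1', LinearMap.trace_eq_matrix_trace ℂ (Pi.basisFun ℂ (Fin 6)),
      LinearMap.toMatrix_eq_toMatrix', h2']
    have h3' : LinearMap.toMatrix' ((Matrix.toLinAlgEquiv' ((algebraMap ℝ ℂ).mapMatrix (P ^ n)) :
        Module.End ℂ (Fin 6 → ℂ)))
        = (algebraMap ℝ ℂ).mapMatrix (P ^ n) :=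
      LinearMap.toMatrix'_toLin' _
    rw [h3']
    simp only [Matrix.trace, RingHom.mapMatrix_apply, Matrix.diag, Matrix.map_apply]
    push_cast
    rfl
  obtain ⟨Λ, hcard, htr⟩ := exists_eigen_multiset f
  have hcard6 : Multiset.card Λ = 6 := by
    rw [hcard]; simp
  have hp : ∀ n : ℕ, (P ^ n).trace = 0 → (Λ.map (fun x => x ^ n)).sum = 0 := by
    intro n hn
    rw [← htr n, htrace n, hn, Complex.ofReal_zero]
  -- produce an indexing function
  have hlen : (6 : ℕ) = Λ.toList.length := by rw [Multiset.length_toList, hcard6]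
  set lam : Fin 6 → ℂ := fun i => Λ.toList.get (Fin.cast hlen i) with hlam
  have hmap : Multiset.map lam Finset.univ.val = Λ := by
    rw [Fin.univ_val_map, hlam, ofFn_get_cast Λ.toList hlen, Multiset.coe_toList]
  have hsum : ∀ n : ℕ, ∑ i, lam i ^ n = (Λ.map (fun x => x ^ n)).sum := by
    intro n
    rw [← hmap, Multiset.map_map]
    rfl
  have hE := esymm_odd_vanish lam
    (by rw [hsum 1]; exact hp 1 (by simpa using h1))
    (by rw [hsum 3]; exact hp 3 h3)
    (by rw [hsum 5]; exact hp 5 h5)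
  rw [hmap] at hE
  intro k
  have hodd := multiset_odd_sum Λ hcard6 hE.1 hE.2.1 hE.2.2 (2 * k + 1) (odd_two_mul_add_one k)
  have := htr (2 * k + 1)
  rw [htrace (2 * k + 1), hodd] at this
  exact_mod_cast this
end

section
/- Let K be a 4×4 real matrix whose characteristic polynomial is x⁴ − σ₁x³ + σ₂x² − σ₃x + σ₄, and set T := K² − σ₁·K. Then trace T = −2σ₂, trace (T²) = 2σ₂² − 2σ₁σ₃ − 4σ₄, and trace (T³) = −2σ₂³ − 3σ₁²σ₄ + 3σ₁σ₂σ₃ + 3σ₃² + 6σ₂σ₄. -/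
open Polynomial Matrix

lemma comp_charpolyRev {R : Type*} [CommRing R] {n : Type*} [Fintype n] [DecidableEq n]
    (M : Matrix n n R) (q : R[X]) :
    (Matrix.charpolyRev M).comp q = Matrix.det (1 - q • M.map C) := by
  rw [Matrix.charpolyRev, comp_eq_aeval, AlgHom.map_det]
  congr 1
  ext i j
  simp only [AlgHom.mapMatrix_apply, Matrix.map_apply, Matrix.sub_apply, Matrix.smul_apply,
    map_sub, smul_eq_mul, _root_.map_mul, aeval_X, aeval_C]
  rcases eq_or_ne i j with h | h <;>
    simp [h, Matrix.one_apply, mul_comm]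

lemma charpolyRev_explicit {R : Type*} [CommRing R] [Nontrivial R]
    (M : Matrix (Fin 4) (Fin 4) R) (a b c d : R)
    (h : M.charpoly = X ^ 4 - C a * X ^ 3 + C b * X ^ 2 - C c * X + C d) :
    M.charpolyRev = 1 - C a * X + C b * X ^ 2 - C c * X ^ 3 + C d * X ^ 4 := by
  have hnd : (X ^ 4 - C a * X ^ 3 + C b * X ^ 2 - C c * X + C d : R[X]).natDegree = 4 := by
    rw [← h, M.charpoly_natDegree_eq_dim, Fintype.card_fin]
  rw [← M.reverse_charpoly, h, Polynomial.reverse, hnd]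
  have e1 : (X ^ 4 - C a * X ^ 3 + C b * X ^ 2 - C c * X + C d : R[X])
      = C 1 * X ^ 4 - C a * X ^ 3 + C b * X ^ 2 - C c * X ^ 1 + C d * X ^ 0 := by
    simp
  rw [e1]
  simp only [reflect_add, reflect_sub, reflect_C_mul_X_pow]
  norm_num [revAt_le]

lemma square_factor {R : Type*} [CommRing R] {n : Type*} [Fintype n] [DecidableEq n]
    (A : Matrix n n R) (x : R) :
    (1 - x • A) * (1 + x • A) = 1 - (x ^ 2) • (A * A) := by
  simp only [sub_mul, mul_add, one_mul, mul_one, smul_mul_smul_comm]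
  match_scalars <;> ring

lemma trace_sq_explicit {R : Type*} [CommRing R] [Nontrivial R]
    (M : Matrix (Fin 4) (Fin 4) R) (a b c d : R)
    (h : M.charpoly = X ^ 4 - C a * X ^ 3 + C b * X ^ 2 - C c * X + C d) :
    (M ^ 2).trace = a ^ 2 - 2 * b := by
  have hF := charpolyRev_explicit M a b c d h
  have hFneg : M.charpolyRev.comp (-X) = 1 + C a * X + C b * X ^ 2 + C c * X ^ 3 + C d * X ^ 4 := by
    rw [hF]
    simp only [add_comp, sub_comp, mul_comp, C_comp, X_comp, pow_comp, one_comp]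
    ring
  have hmap : (M ^ 2).map C = M.map C * M.map C := by rw [pow_two, Matrix.map_mul]
  have key : expand R 2 ((M ^ 2).charpolyRev) = M.charpolyRev * M.charpolyRev.comp (-X) := by
    rw [expand_eq_comp_X_pow, comp_charpolyRev, comp_charpolyRev (q := -X)]
    rw [Matrix.charpolyRev, neg_smul, sub_neg_eq_add, ← det_mul, square_factor, hmap]
  have h1 := Matrix.coeff_charpolyRev_eq_neg_trace (M ^ 2)
  have h2 : (expand R 2 ((M ^ 2).charpolyRev)).coeff 2 = ((M ^ 2).charpolyRev).coeff 1 := by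
    simpa using coeff_expand_mul' (p := 2) two_pos ((M ^ 2).charpolyRev) 1
  have h3 : M.charpolyRev * M.charpolyRev.comp (-X)
      = 1 + C (2 * b - a ^ 2) * X ^ 2 + C (b ^ 2 - 2 * a * c + 2 * d) * X ^ 4
        + C (2 * b * d - c ^ 2) * X ^ 6 + C (d ^ 2) * X ^ 8 := by
    rw [hFneg, hF]
    simp only [map_sub, map_add, _root_.map_mul, map_pow, map_ofNat]
    ring
  have h4 : (M.charpolyRev * M.charpolyRev.comp (-X)).coeff 2 = 2 * b - a ^ 2 := by
    rw [h3]
    simp only [← C_pow, ← C_mul, ← C_sub, ← C_add, coeff_add, coeff_C_mul, coeff_X_pow, coeff_one]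
    norm_num
  rw [key, h4] at h2
  linear_combination h1 + h2

lemma cube_factor {R : Type*} [CommRing R] {n : Type*} [Fintype n] [DecidableEq n]
    (A : Matrix n n R) (u x : R) (hu : u ^ 2 + u + 1 = 0) :
    (1 - x • A) * (1 - (u * x) • A) * (1 - (u ^ 2 * x) • A) = 1 - (x ^ 3) • (A * A * A) := by
  have hu3 : u ^ 3 = 1 := by linear_combination (u - 1) * hu
  simp only [sub_mul, mul_sub, mul_one, one_mul, smul_mul_smul_comm]
  match_scalars
  · ring
  · linear_combination (-x) * hu
  · linear_combination (x^2*u) * hu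
  · linear_combination (-x^3) * hu3

lemma trace_cube_explicit {R : Type*} [CommRing R] [Nontrivial R]
    (M : Matrix (Fin 4) (Fin 4) R) (a b c d u : R) (hu : u ^ 2 + u + 1 = 0)
    (h : M.charpoly = X ^ 4 - C a * X ^ 3 + C b * X ^ 2 - C c * X + C d) :
    (M ^ 3).trace = a ^ 3 - 3 * a * b + 3 * c := by
  have hF := charpolyRev_explicit M a b c d h
  have huC : (C u : R[X]) ^ 2 + C u + 1 = 0 := by
    have := congrArg C hu
    simpa [C_add, C_pow] using this
  have hF1 : M.charpolyRev.comp (C u * X) = 1 - C a * (C u * X) + C b * (C u * X) ^ 2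
      - C c * (C u * X) ^ 3 + C d * (C u * X) ^ 4 := by
    rw [hF]
    simp only [add_comp, sub_comp, mul_comp, C_comp, X_comp, pow_comp, one_comp]
  have hF2 : M.charpolyRev.comp (C u ^ 2 * X) = 1 - C a * (C u ^ 2 * X) + C b * (C u ^ 2 * X) ^ 2
      - C c * (C u ^ 2 * X) ^ 3 + C d * (C u ^ 2 * X) ^ 4 := by
    rw [hF]
    simp only [add_comp, sub_comp, mul_comp, C_comp, X_comp, pow_comp, one_comp]
  have hmap3 : (M ^ 3).map C = M.map C * M.map C * M.map C := by
    rw [pow_succ, pow_two, Matrix.map_mul, Matrix.map_mul]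
  have key : expand R 3 ((M ^ 3).charpolyRev)
      = M.charpolyRev * M.charpolyRev.comp (C u * X) * M.charpolyRev.comp (C u ^ 2 * X) := by
    rw [expand_eq_comp_X_pow, comp_charpolyRev, comp_charpolyRev, comp_charpolyRev,
      Matrix.charpolyRev, ← det_mul, ← det_mul, cube_factor _ (C u) X huC, hmap3]
  have h1 := Matrix.coeff_charpolyRev_eq_neg_trace (M ^ 3)
  have h2 : (expand R 3 ((M ^ 3).charpolyRev)).coeff 3 = ((M ^ 3).charpolyRev).coeff 1 := by
    simpa using coeff_expand_mul' (p := 3) (by norm_num) ((M ^ 3).charpolyRev) 1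
  have h3 : M.charpolyRev * M.charpolyRev.comp (C u * X) * M.charpolyRev.comp (C u ^ 2 * X)
      = 1 + C (3 * a * b - a ^ 3 - 3 * c) * X ^ 3
        + C (3 * c ^ 2 - 3 * b * d + b ^ 3 - 3 * a * b * c + 3 * a ^ 2 * d) * X ^ 6
        + C (- c ^ 3 + 3 * b * c * d - 3 * a * d ^ 2) * X ^ 9 + C (d ^ 3) * X ^ 12 := by
    rw [hF1, hF2, hF]
    simp only [map_sub, map_add, _root_.map_mul, map_pow, map_ofNat, map_neg, _root_.map_one]
    linear_combination ((1 : R[X]) * C d * X ^ 4 +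
      (-1 : R[X]) * C d * C u * X ^ 4 +
      (1 : R[X]) * C d * C u ^ 3 * X ^ 4 +
      (-1 : R[X]) * C d * C u ^ 5 * X ^ 4 +
      (1 : R[X]) * C d * C u ^ 6 * X ^ 4 +
      (1 : R[X]) * C d ^ 2 * C u ^ 4 * X ^ 8 +
      (-1 : R[X]) * C d ^ 2 * C u ^ 5 * X ^ 8 +
      (1 : R[X]) * C d ^ 2 * C u ^ 7 * X ^ 8 +
      (-1 : R[X]) * C d ^ 2 * C u ^ 9 * X ^ 8 +
      (1 : R[X]) * C d ^ 2 * C u ^ 10 * X ^ 8 +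
      (-1 : R[X]) * C d ^ 3 * X ^ 12 +
      (1 : R[X]) * C d ^ 3 * C u * X ^ 12 +
      (-1 : R[X]) * C d ^ 3 * C u ^ 3 * X ^ 12 +
      (1 : R[X]) * C d ^ 3 * C u ^ 4 * X ^ 12 +
      (-1 : R[X]) * C d ^ 3 * C u ^ 6 * X ^ 12 +
      (1 : R[X]) * C d ^ 3 * C u ^ 7 * X ^ 12 +
      (-1 : R[X]) * C d ^ 3 * C u ^ 9 * X ^ 12 +
      (1 : R[X]) * C d ^ 3 * C u ^ 10 * X ^ 12 +
      (2 : R[X]) * C c * X ^ 3 +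
      (-2 : R[X]) * C c * C u * X ^ 3 +
      (1 : R[X]) * C c * C u ^ 3 * X ^ 3 +
      (-1 : R[X]) * C c * C u ^ 4 * X ^ 3 +
      (-1 : R[X]) * C c * C d * C u ^ 3 * X ^ 7 +
      (1 : R[X]) * C c * C d * C u ^ 5 * X ^ 7 +
      (-2 : R[X]) * C c * C d * C u ^ 6 * X ^ 7 +
      (1 : R[X]) * C c * C d * C u ^ 7 * X ^ 7 +
      (-1 : R[X]) * C c * C d * C u ^ 9 * X ^ 7 +
      (-1 : R[X]) * C c * C d ^ 2 * C u ^ 10 * X ^ 11 +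
      (-3 : R[X]) * C c ^ 2 * X ^ 6 +
      (3 : R[X]) * C c ^ 2 * C u * X ^ 6 +
      (-2 : R[X]) * C c ^ 2 * C u ^ 3 * X ^ 6 +
      (2 : R[X]) * C c ^ 2 * C u ^ 4 * X ^ 6 +
      (-1 : R[X]) * C c ^ 2 * C u ^ 6 * X ^ 6 +
      (1 : R[X]) * C c ^ 2 * C u ^ 7 * X ^ 6 +
      (1 : R[X]) * C c ^ 2 * C d * C u ^ 9 * X ^ 10 +
      (1 : R[X]) * C c ^ 3 * X ^ 9 +
      (-1 : R[X]) * C c ^ 3 * C u * X ^ 9 +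
      (1 : R[X]) * C c ^ 3 * C u ^ 3 * X ^ 9 +
      (-1 : R[X]) * C c ^ 3 * C u ^ 4 * X ^ 9 +
      (1 : R[X]) * C c ^ 3 * C u ^ 6 * X ^ 9 +
      (-1 : R[X]) * C c ^ 3 * C u ^ 7 * X ^ 9 +
      (1 : R[X]) * C b * X ^ 2 +
      (-1 : R[X]) * C b * C u * X ^ 2 +
      (1 : R[X]) * C b * C u ^ 2 * X ^ 2 +
      (3 : R[X]) * C b * C d * X ^ 6 +
      (-3 : R[X]) * C b * C d * C u * X ^ 6 +
      (1 : R[X]) * C b * C d * C u ^ 2 * X ^ 6 +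
      (2 : R[X]) * C b * C d * C u ^ 3 * X ^ 6 +
      (-1 : R[X]) * C b * C d * C u ^ 4 * X ^ 6 +
      (-1 : R[X]) * C b * C d * C u ^ 5 * X ^ 6 +
      (2 : R[X]) * C b * C d * C u ^ 6 * X ^ 6 +
      (-1 : R[X]) * C b * C d * C u ^ 7 * X ^ 6 +
      (1 : R[X]) * C b * C d * C u ^ 8 * X ^ 6 +
      (1 : R[X]) * C b * C d ^ 2 * C u ^ 8 * X ^ 10 +
      (-1 : R[X]) * C b * C d ^ 2 * C u ^ 9 * X ^ 10 +
      (1 : R[X]) * C b * C d ^ 2 * C u ^ 10 * X ^ 10 +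
      (-1 : R[X]) * C b * C c * C u ^ 2 * X ^ 5 +
      (-1 : R[X]) * C b * C c * C u ^ 6 * X ^ 5 +
      (-3 : R[X]) * C b * C c * C d * X ^ 9 +
      (3 : R[X]) * C b * C c * C d * C u * X ^ 9 +
      (-3 : R[X]) * C b * C c * C d * C u ^ 3 * X ^ 9 +
      (3 : R[X]) * C b * C c * C d * C u ^ 4 * X ^ 9 +
      (-3 : R[X]) * C b * C c * C d * C u ^ 6 * X ^ 9 +
      (2 : R[X]) * C b * C c * C d * C u ^ 7 * X ^ 9 +
      (-1 : R[X]) * C b * C c * C d * C u ^ 8 * X ^ 9 +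
      (-1 : R[X]) * C b * C c * C d * C u ^ 9 * X ^ 9 +
      (1 : R[X]) * C b * C c ^ 2 * C u ^ 7 * X ^ 8 +
      (1 : R[X]) * C b ^ 2 * C u ^ 2 * X ^ 4 +
      (-1 : R[X]) * C b ^ 2 * C u ^ 3 * X ^ 4 +
      (1 : R[X]) * C b ^ 2 * C u ^ 4 * X ^ 4 +
      (1 : R[X]) * C b ^ 2 * C d * C u ^ 6 * X ^ 8 +
      (-1 : R[X]) * C b ^ 2 * C d * C u ^ 7 * X ^ 8 +
      (1 : R[X]) * C b ^ 2 * C d * C u ^ 8 * X ^ 8 +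
      (-1 : R[X]) * C b ^ 2 * C c * C u ^ 6 * X ^ 7 +
      (-1 : R[X]) * C b ^ 3 * X ^ 6 +
      (1 : R[X]) * C b ^ 3 * C u * X ^ 6 +
      (-1 : R[X]) * C b ^ 3 * C u ^ 3 * X ^ 6 +
      (1 : R[X]) * C b ^ 3 * C u ^ 4 * X ^ 6 +
      (-1 : R[X]) * C a * X +
      (-1 : R[X]) * C a * C d * C u * X ^ 5 +
      (1 : R[X]) * C a * C d * C u ^ 3 * X ^ 5 +
      (-2 : R[X]) * C a * C d * C u ^ 4 * X ^ 5 +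
      (1 : R[X]) * C a * C d * C u ^ 5 * X ^ 5 +
      (-1 : R[X]) * C a * C d * C u ^ 7 * X ^ 5 +
      (3 : R[X]) * C a * C d ^ 2 * X ^ 9 +
      (-3 : R[X]) * C a * C d ^ 2 * C u * X ^ 9 +
      (3 : R[X]) * C a * C d ^ 2 * C u ^ 3 * X ^ 9 +
      (-3 : R[X]) * C a * C d ^ 2 * C u ^ 4 * X ^ 9 +
      (2 : R[X]) * C a * C d ^ 2 * C u ^ 6 * X ^ 9 +
      (-2 : R[X]) * C a * C d ^ 2 * C u ^ 7 * X ^ 9 +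
      (1 : R[X]) * C a * C d ^ 2 * C u ^ 9 * X ^ 9 +
      (-1 : R[X]) * C a * C d ^ 2 * C u ^ 10 * X ^ 9 +
      (1 : R[X]) * C a * C c * C u * X ^ 4 +
      (1 : R[X]) * C a * C c * C u ^ 5 * X ^ 4 +
      (1 : R[X]) * C a * C c * C d * C u ^ 5 * X ^ 8 +
      (1 : R[X]) * C a * C c * C d * C u ^ 9 * X ^ 8 +
      (-1 : R[X]) * C a * C c ^ 2 * C u ^ 5 * X ^ 7 +
      (1 : R[X]) * C a * C c ^ 2 * C u ^ 6 * X ^ 7 +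
      (-1 : R[X]) * C a * C c ^ 2 * C u ^ 7 * X ^ 7 +
      (-3 : R[X]) * C a * C b * X ^ 3 +
      (2 : R[X]) * C a * C b * C u * X ^ 3 +
      (-1 : R[X]) * C a * C b * C u ^ 2 * X ^ 3 +
      (-1 : R[X]) * C a * C b * C u ^ 3 * X ^ 3 +
      (-1 : R[X]) * C a * C b * C d * C u ^ 4 * X ^ 7 +
      (-1 : R[X]) * C a * C b * C d * C u ^ 8 * X ^ 7 +
      (3 : R[X]) * C a * C b * C c * X ^ 6 +
      (-3 : R[X]) * C a * C b * C c * C u * X ^ 6 +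
      (3 : R[X]) * C a * C b * C c * C u ^ 3 * X ^ 6 +
      (-2 : R[X]) * C a * C b * C c * C u ^ 4 * X ^ 6 +
      (1 : R[X]) * C a * C b * C c * C u ^ 5 * X ^ 6 +
      (1 : R[X]) * C a * C b * C c * C u ^ 6 * X ^ 6 +
      (-1 : R[X]) * C a * C b ^ 2 * C u ^ 4 * X ^ 5 +
      (1 : R[X]) * C a ^ 2 * C u * X ^ 2 +
      (-3 : R[X]) * C a ^ 2 * C d * X ^ 6 +
      (3 : R[X]) * C a ^ 2 * C d * C u * X ^ 6 +
      (-2 : R[X]) * C a ^ 2 * C d * C u ^ 3 * X ^ 6 +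
      (2 : R[X]) * C a ^ 2 * C d * C u ^ 4 * X ^ 6 +
      (-1 : R[X]) * C a ^ 2 * C d * C u ^ 6 * X ^ 6 +
      (1 : R[X]) * C a ^ 2 * C d * C u ^ 7 * X ^ 6 +
      (-1 : R[X]) * C a ^ 2 * C c * C u ^ 3 * X ^ 5 +
      (1 : R[X]) * C a ^ 2 * C c * C u ^ 4 * X ^ 5 +
      (-1 : R[X]) * C a ^ 2 * C c * C u ^ 5 * X ^ 5 +
      (1 : R[X]) * C a ^ 2 * C b * C u ^ 3 * X ^ 4 +
      (1 : R[X]) * C a ^ 3 * X ^ 3 +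
      (-1 : R[X]) * C a ^ 3 * C u * X ^ 3) * huC
  have h4 : (M.charpolyRev * M.charpolyRev.comp (C u * X)
      * M.charpolyRev.comp (C u ^ 2 * X)).coeff 3 = 3 * a * b - a ^ 3 - 3 * c := by
    rw [h3]
    simp only [← C_pow, ← C_mul, ← C_sub, ← C_add, ← C_neg, coeff_add, coeff_C_mul, coeff_X_pow,
      coeff_one]
    norm_num
  rw [key, h4] at h2
  linear_combination h1 + h2

/-- If the characteristic polynomial of a `4 × 4` real matrix `K` is
`x⁴ − σ₁x³ + σ₂x² − σ₃x + σ₄` and `T = K² − σ₁K`, then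
`trace T = −2σ₂`, `trace T² = 2σ₂² − 2σ₁σ₃ − 4σ₄` and
`trace T³ = −2σ₂³ − 3σ₁²σ₄ + 3σ₁σ₂σ₃ + 3σ₃² + 6σ₂σ₄`. -/
theorem traces_of_T_from_charpoly
    (K : Matrix (Fin 4) (Fin 4) ℝ) (s1 s2 s3 s4 : ℝ)
    (hK : K.charpoly =
      X ^ 4 - C s1 * X ^ 3 + C s2 * X ^ 2 - C s3 * X + C s4) :
    (K ^ 2 - s1 • K).trace = -2 * s2 ∧
    ((K ^ 2 - s1 • K) ^ 2).trace = 2 * s2 ^ 2 - 2 * s1 * s3 - 4 * s4 ∧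
    ((K ^ 2 - s1 • K) ^ 3).trace =
      -2 * s2 ^ 3 - 3 * s1 ^ 2 * s4 + 3 * s1 * s2 * s3 + 3 * s3 ^ 2 + 6 * s2 * s4 := by
  -- power sums
  have hp1 : K.trace = s1 := by
    have := Matrix.trace_eq_neg_charpoly_coeff K
    rw [hK] at this
    simp only [Fintype.card_fin, coeff_add, coeff_sub, coeff_C_mul, coeff_X_pow, coeff_C,
      coeff_X] at this
    norm_num at this
    linarith
  have hp2 : (K ^ 2).trace = s1 ^ 2 - 2 * s2 := trace_sq_explicit K s1 s2 s3 s4 hK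
  have hp3 : (K ^ 3).trace = s1 ^ 3 - 3 * s1 * s2 + 3 * s3 := by
    set u : ℂ := (-1 + Real.sqrt 3 * Complex.I) / 2 with hu_def
    have ht : (Real.sqrt 3 : ℂ) ^ 2 = 3 := by
      norm_cast
      exact Real.sq_sqrt (by norm_num)
    have hI := Complex.I_sq
    have hu : u ^ 2 + u + 1 = 0 := by
      rw [hu_def]
      linear_combination (Complex.I ^ 2 / 4) * ht + (3 / 4 : ℂ) * hI
    set Kc := K.map (algebraMap ℝ ℂ) with hKc_def
    have hKc : Kc.charpoly = X ^ 4 - C (s1 : ℂ) * X ^ 3 + C (s2 : ℂ) * X ^ 2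
        - C (s3 : ℂ) * X + C (s4 : ℂ) := by
      rw [hKc_def, Matrix.charpoly_map, hK]
      simp [Polynomial.map_add, Polynomial.map_sub, Polynomial.map_mul, Polynomial.map_pow]
    have hc3 := trace_cube_explicit Kc (s1 : ℂ) (s2 : ℂ) (s3 : ℂ) (s4 : ℂ) u hu hKc
    have hmap : Kc ^ 3 = (K ^ 3).map (algebraMap ℝ ℂ) := by
      rw [hKc_def, pow_succ, pow_succ, pow_one, pow_succ, pow_succ, pow_one,
        Matrix.map_mul, Matrix.map_mul]
    have htr : ((K ^ 3).map (algebraMap ℝ ℂ)).trace = (((K ^ 3).trace : ℝ) : ℂ) := by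
      simp [Matrix.trace, Matrix.diag, Matrix.map_apply]
    rw [hmap, htr] at hc3
    exact_mod_cast hc3
  -- Cayley–Hamilton
  have hch : aeval K (X ^ 4 - C s1 * X ^ 3 + C s2 * X ^ 2 - C s3 * X + C s4 : ℝ[X]) = 0 := by
    rw [← hK]; exact Matrix.aeval_self_charpoly K
  have e : K ^ 2 - s1 • K = aeval K (X ^ 2 - C s1 * X) := by
    simp [map_sub, _root_.map_mul, map_pow, aeval_X, aeval_C, Algebra.smul_def]
  have htrone : (1 : Matrix (Fin 4) (Fin 4) ℝ).trace = 4 := by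
    simp [Matrix.trace_one]
  -- T²
  have hq2 : (X ^ 2 - C s1 * X : ℝ[X]) ^ 2
      = (X ^ 4 - C s1 * X ^ 3 + C s2 * X ^ 2 - C s3 * X + C s4) * 1
        + (C (-s1) * X ^ 3 + C (s1 ^ 2 - s2) * X ^ 2 + C s3 * X + C (-s4)) := by
    simp only [map_sub, map_add, map_neg, map_pow, _root_.map_mul]
    ring
  have hT2 : ((K ^ 2 - s1 • K) ^ 2).trace
      = (-s1) * (K ^ 3).trace + (s1 ^ 2 - s2) * (K ^ 2).trace + s3 * K.trace + (-s4) * 4 := by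
    rw [e, ← map_pow, hq2, map_add, _root_.map_mul, hch, zero_mul, zero_add]
    simp only [map_add, _root_.map_mul, aeval_C, aeval_X, map_pow, ← Algebra.smul_def,
      Matrix.trace_add, Matrix.trace_smul, smul_eq_mul, Algebra.algebraMap_eq_smul_one]
    rw [htrone]
    simp [add_mul, smul_mul_assoc, smul_smul, Matrix.trace_add, Matrix.trace_smul]
  -- T³
  have hq3 : (X ^ 2 - C s1 * X : ℝ[X]) ^ 3
      = (X ^ 4 - C s1 * X ^ 3 + C s2 * X ^ 2 - C s3 * X + C s4)
          * (X ^ 2 - C (2 * s1) * X + C (s1 ^ 2 - s2))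
        + (C (s1 * s2 + s3) * X ^ 3 + C (s2 ^ 2 - s1 ^ 2 * s2 - 2 * s1 * s3 - s4) * X ^ 2
          + C (s1 ^ 2 * s3 - s2 * s3 + 2 * s1 * s4) * X + C (s2 * s4 - s1 ^ 2 * s4)) := by
    simp only [map_sub, map_add, map_neg, map_pow, _root_.map_mul, map_ofNat]
    ring
  have hT3 : ((K ^ 2 - s1 • K) ^ 3).trace
      = (s1 * s2 + s3) * (K ^ 3).trace + (s2 ^ 2 - s1 ^ 2 * s2 - 2 * s1 * s3 - s4) * (K ^ 2).trace
        + (s1 ^ 2 * s3 - s2 * s3 + 2 * s1 * s4) * K.trace + (s2 * s4 - s1 ^ 2 * s4) * 4 := by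
    rw [e, ← map_pow, hq3, map_add, _root_.map_mul, hch, zero_mul, zero_add]
    simp only [map_add, _root_.map_mul, aeval_C, aeval_X, map_pow, ← Algebra.smul_def,
      Matrix.trace_add, Matrix.trace_smul, smul_eq_mul, Algebra.algebraMap_eq_smul_one]
    rw [htrone]
    simp [add_mul, smul_mul_assoc, smul_smul, Matrix.trace_add, Matrix.trace_smul]
    ring
  refine ⟨?_, ?_, ?_⟩
  · rw [Matrix.trace_sub, Matrix.trace_smul]
    simp only [smul_eq_mul]
    linear_combination hp2 - s1 * hp1
  · rw [hT2]
    linear_combination (-s1) * hp3 + (s1 ^ 2 - s2) * hp2 + s3 * hp1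
  · rw [hT3]
    linear_combination (s1 * s2 + s3) * hp3 + (s2 ^ 2 - s1 ^ 2 * s2 - 2 * s1 * s3 - s4) * hp2
      + (s1 ^ 2 * s3 - s2 * s3 + 2 * s1 * s4) * hp1
end

section
/- Let m > 0 and consider the function ρ(r) = 4m·√(1 − 2m/r) on the interval r > 2m. Then ρ is differentiable there and for every r > 2m, (ρ'(r))² + ((2m/r)³ + (2m/r)² + (2m/r)) + 1 = (1 − 2m/r)⁻¹. -/
/-- The radial part of the Fronsdal-type embedding of the Euclidean Schwarzschild metric:
with `ρ(r) = 4m√(1 − 2m/r)` on `r > 2m`, `ρ` is differentiable and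
`ρ'² + ((2m/r)³ + (2m/r)² + (2m/r)) + 1 = (1 − 2m/r)⁻¹`. -/
theorem schwarzschild_fronsdal_radial
    (m : ℝ) (hm : 0 < m) :
    ∀ r : ℝ, 2 * m < r →
      DifferentiableAt ℝ (fun s : ℝ => 4 * m * Real.sqrt (1 - 2 * m / s)) r ∧
      (deriv (fun s : ℝ => 4 * m * Real.sqrt (1 - 2 * m / s)) r) ^ 2
        + ((2 * m / r) ^ 3 + (2 * m / r) ^ 2 + (2 * m / r)) + 1
        = (1 - 2 * m / r)⁻¹ := by
  intro r hr
  have hr0 : 0 < r := lt_trans (by positivity) hr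
  have ha : 0 < 1 - 2 * m / r := by
    have : 2 * m / r < 1 := (div_lt_one hr0).mpr hr
    linarith
  have hrm : (0:ℝ) < r - 2 * m := by linarith
  have h1 : HasDerivAt (fun s : ℝ => 1 - 2 * m / s) (2 * m / r ^ 2) r := by
    have hinv : HasDerivAt (fun s : ℝ => s⁻¹) (-(r ^ 2)⁻¹) r := hasDerivAt_inv hr0.ne'
    have h := (hinv.const_mul (2 * m)).const_sub 1
    have h' : HasDerivAt (fun s : ℝ => 1 - 2 * m / s) (-(2 * m * -(r ^ 2)⁻¹)) r := by
      simpa [div_eq_mul_inv] using h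
    convert h' using 1
    field_simp
  have hs : Real.sqrt (1 - 2 * m / r) ≠ 0 := by positivity
  have h2 : HasDerivAt (fun s : ℝ => 4 * m * Real.sqrt (1 - 2 * m / s))
      (4 * m * (2 * m / r ^ 2 / (2 * Real.sqrt (1 - 2 * m / r)))) r :=
    (h1.sqrt ha.ne').const_mul (4 * m)
  refine ⟨h2.differentiableAt, ?_⟩
  rw [h2.deriv]
  have hsq : Real.sqrt (1 - 2 * m / r) ^ 2 = 1 - 2 * m / r := Real.sq_sqrt ha.le
  have hspos : 0 < Real.sqrt (1 - 2 * m / r) := Real.sqrt_pos.mpr ha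
  set s := Real.sqrt (1 - 2 * m / r) with hsdef
  have hu : r * s ^ 2 = r - 2 * m := by
    rw [hsq]; field_simp
  rw [← hsq]
  field_simp
  linear_combination (2*m*(4*m^2+2*m*r+r^2) + r^3) * hu
end

section
/- The function g(r) = −2/(r(r²+1)) is differentiable on r > 0 and satisfies, for every r > 0, the differential equation −r·(−3 + (r³+r)·g(r))·(r²+1)²·g'(r) + r²·(r²+1)³·g(r)³ + (−2r⁷ + 6r³ + 4r)·g(r)² + (3r⁴ + 12r² + 9)·g(r) − 16r = 0. -/
/-- The function `g(r) = −2/(r(r²+1))` is differentiable for `r > 0` and solves the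
first Yakupov–Agaoka obstruction ODE `Φ₃ = 0` for radial conformal rescalings of the
Fubini–Study metric. -/
theorem agaoka_ode_solution :
    ∀ r : ℝ, 0 < r →
      DifferentiableAt ℝ (fun s : ℝ => -2 / (s * (s ^ 2 + 1))) r ∧
      -r * (-3 + (r ^ 3 + r) * (-2 / (r * (r ^ 2 + 1)))) * (r ^ 2 + 1) ^ 2
          * deriv (fun s : ℝ => -2 / (s * (s ^ 2 + 1))) r
        + r ^ 2 * (r ^ 2 + 1) ^ 3 * (-2 / (r * (r ^ 2 + 1))) ^ 3
        + (-2 * r ^ 7 + 6 * r ^ 3 + 4 * r) * (-2 / (r * (r ^ 2 + 1))) ^ 2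
        + (3 * r ^ 4 + 12 * r ^ 2 + 9) * (-2 / (r * (r ^ 2 + 1)))
        - 16 * r = 0 := by
  intro r hr
  have hne : r * (r ^ 2 + 1) ≠ 0 := by positivity
  have hden : HasDerivAt (fun s : ℝ => s * (s ^ 2 + 1)) (1 * (r ^ 2 + 1) + r * (2 * r)) r := by
    have h1 : HasDerivAt (fun s : ℝ => s) 1 r := hasDerivAt_id r
    have h2 : HasDerivAt (fun s : ℝ => s ^ 2 + 1) (2 * r) r := by
      simpa using ((hasDerivAt_pow 2 r).add_const 1)
    exact h1.mul h2
  have hg : HasDerivAt (fun s : ℝ => -2 / (s * (s ^ 2 + 1)))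
      ((0 * (r * (r ^ 2 + 1)) - (-2) * (1 * (r ^ 2 + 1) + r * (2 * r))) /
        (r * (r ^ 2 + 1)) ^ 2) r :=
    (hasDerivAt_const r (-2 : ℝ)).div hden hne
  refine ⟨hg.differentiableAt, ?_⟩
  rw [hg.deriv]
  have hr' : r ≠ 0 := ne_of_gt hr
  have h1 : (r : ℝ) ^ 2 + 1 ≠ 0 := by positivity
  field_simp
  ring
end

section
/- For every real r, with Ω(r) = 1/(1+4r²), R(r) = r/(1+4r²), Z(r) = 1/(2(1+4r²)), the functions R and Z are differentiable and (R'(r))² + (Z'(r))² = Ω(r)². Moreover R(r)² = 4·Ω(r)²·c(r) and Z(r)² = Ω(r)²·(b(r) − c(r)) with b(r) = (r²+1)/4 and c(r) = r²/4. -/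
/-- The second radial conformal embedding of the Burns metric into flat `ℝ⁷`:
with `Ω = 1/(1+4r²)`, `R = r/(1+4r²)`, `Z = 1/(2(1+4r²))`, one has
`R'² + Z'² = Ω²`, `R² = 4Ω²c` and `Z² = Ω²(b−c)` where `b = (r²+1)/4`, `c = r²/4`. -/
theorem burns_second_conformal_embedding :
    ∀ r : ℝ,
      DifferentiableAt ℝ (fun s : ℝ => s / (1 + 4 * s ^ 2)) r ∧
      DifferentiableAt ℝ (fun s : ℝ => 1 / (2 * (1 + 4 * s ^ 2))) r ∧
      (deriv (fun s : ℝ => s / (1 + 4 * s ^ 2)) r) ^ 2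
          + (deriv (fun s : ℝ => 1 / (2 * (1 + 4 * s ^ 2))) r) ^ 2
        = (1 / (1 + 4 * r ^ 2)) ^ 2 ∧
      (r / (1 + 4 * r ^ 2)) ^ 2
        = 4 * (1 / (1 + 4 * r ^ 2)) ^ 2 * (r ^ 2 / 4) ∧
      (1 / (2 * (1 + 4 * r ^ 2))) ^ 2
        = (1 / (1 + 4 * r ^ 2)) ^ 2 * ((r ^ 2 + 1) / 4 - r ^ 2 / 4) := by
  intro r
  have hne : (1 + 4 * r ^ 2) ≠ 0 := by positivity
  have hne2 : (2 * (1 + 4 * r ^ 2)) ≠ 0 := by positivity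
  have hd : HasDerivAt (fun s : ℝ => 1 + 4 * s ^ 2) (8 * r) r := by
    have := ((hasDerivAt_pow 2 r).const_mul 4).const_add 1
    exact this.congr_deriv (by norm_num; ring)
  have hR : HasDerivAt (fun s : ℝ => s / (1 + 4 * s ^ 2))
      ((1 * (1 + 4 * r ^ 2) - r * (8 * r)) / (1 + 4 * r ^ 2) ^ 2) r :=
    (hasDerivAt_id r).div hd hne
  have hZ : HasDerivAt (fun s : ℝ => 1 / (2 * (1 + 4 * s ^ 2)))
      ((0 * (2 * (1 + 4 * r ^ 2)) - 1 * (2 * (8 * r))) / (2 * (1 + 4 * r ^ 2)) ^ 2) r :=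
    (hasDerivAt_const r 1).div (hd.const_mul 2) hne2
  refine ⟨hR.differentiableAt, hZ.differentiableAt, ?_, ?_, ?_⟩
  · rw [hR.deriv, hZ.deriv]
    field_simp
    ring
  · field_simp
  · field_simp
    ring
end

section
/- For every real r, with Ω(r) = (r²+1)/(r²+4), R(r) = r/(r²+4), Z(r) = r²/(2(r²+4)), the functions R and Z are differentiable and (R'(r))² + (Z'(r))² = 1/(r²+4)² = Ω(r)²·a(r), where a(r) = 1/(1+r²)². Moreover R(r)² = 4·Ω(r)²·c(r) and Z(r)² = Ω(r)²·(b(r) − c(r)) with b(r) = r²/(4(1+r²)) and c(r) = r²/(4(1+r²)²). -/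
/-- The second radial conformal embedding of the Fubini–Study metric into flat `ℝ⁷`:
with `Ω = (r²+1)/(r²+4)`, `R = r/(r²+4)`, `Z = r²/(2(r²+4))`, one has
`R'² + Z'² = 1/(r²+4)² = Ω²a`, `R² = 4Ω²c` and `Z² = Ω²(b−c)`, where
`a = 1/(1+r²)²`, `b = r²/(4(1+r²))`, `c = r²/(4(1+r²)²)`. -/
theorem fubini_study_second_conformal_embedding :
    ∀ r : ℝ,
      DifferentiableAt ℝ (fun s : ℝ => s / (s ^ 2 + 4)) r ∧
      DifferentiableAt ℝ (fun s : ℝ => s ^ 2 / (2 * (s ^ 2 + 4))) r ∧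
      ((deriv (fun s : ℝ => s / (s ^ 2 + 4)) r) ^ 2
          + (deriv (fun s : ℝ => s ^ 2 / (2 * (s ^ 2 + 4))) r) ^ 2
          = 1 / (r ^ 2 + 4) ^ 2
        ∧ (1 / (r ^ 2 + 4) ^ 2 : ℝ)
          = ((r ^ 2 + 1) / (r ^ 2 + 4)) ^ 2 * (1 / (1 + r ^ 2) ^ 2)) ∧
      (r / (r ^ 2 + 4)) ^ 2
        = 4 * ((r ^ 2 + 1) / (r ^ 2 + 4)) ^ 2 * (r ^ 2 / (4 * (1 + r ^ 2) ^ 2)) ∧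
      (r ^ 2 / (2 * (r ^ 2 + 4))) ^ 2
        = ((r ^ 2 + 1) / (r ^ 2 + 4)) ^ 2
            * (r ^ 2 / (4 * (1 + r ^ 2)) - r ^ 2 / (4 * (1 + r ^ 2) ^ 2)) := by
  intro r
  have hd4 : (r ^ 2 + 4 : ℝ) ≠ 0 := by positivity
  have hd4' : (2 * (r ^ 2 + 4) : ℝ) ≠ 0 := by positivity
  have h1 : (1 + r ^ 2 : ℝ) ≠ 0 := by positivity
  have hden : HasDerivAt (fun s : ℝ => s ^ 2 + 4) (2 * r) r := by
    simpa using ((hasDerivAt_pow 2 r).add_const 4)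
  have hden2 : HasDerivAt (fun s : ℝ => 2 * (s ^ 2 + 4)) (2 * (2 * r)) r :=
    hden.const_mul 2
  have hR : HasDerivAt (fun s : ℝ => s / (s ^ 2 + 4))
      ((1 * (r ^ 2 + 4) - r * (2 * r)) / (r ^ 2 + 4) ^ 2) r :=
    (hasDerivAt_id r).div hden hd4
  have hZ : HasDerivAt (fun s : ℝ => s ^ 2 / (2 * (s ^ 2 + 4)))
      ((2 * r ^ 1 * (2 * (r ^ 2 + 4)) - r ^ 2 * (2 * (2 * r))) / (2 * (r ^ 2 + 4)) ^ 2) r :=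
    (hasDerivAt_pow 2 r).div hden2 hd4'
  refine ⟨hR.differentiableAt, hZ.differentiableAt, ⟨?_, ?_⟩, ?_, ?_⟩
  · rw [hR.deriv, hZ.deriv]
    field_simp
    ring
  · field_simp
    ring
  · field_simp
    ring
  · field_simp
    ring
end

section
/- Let I ⊆ ℝ be an open interval and let a, b, c : I → ℝ be differentiable functions with a > 0, c > 0 and b > c on I. Set h := (b − c)/4 and suppose D := a·(c + h) − (c·h' − h·c')²/(c·h) ≥ 0 on I. Let σ ∈ {−1, 1} and let Ω : I → ℝ be a positive differentiable function satisfying Ω'(r) = Ω(r)·(−c'(r) − h'(r) + σ·√(D(r)))/(2·(c(r) + h(r))) for all r ∈ I. Then the functions R := 2Ω√c and Z := 2Ω√h satisfy (R'(r))² + (Z'(r))² = a(r)·Ω(r)² for all r ∈ I. -/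
private lemma key_alg0 (A C' H' Ω0 σ sD sc sh : ℝ)
    (hsc : sc ≠ 0) (hsh : sh ≠ 0)
    (hsD : sD ^ 2 = A * (sc ^ 2 + sh ^ 2)
      - (sc ^ 2 * H' - sh ^ 2 * C') ^ 2 / (sc ^ 2 * sh ^ 2))
    (hσ : σ = 1 ∨ σ = -1) :
    (2 * (Ω0 * (-C' - H' + σ * sD) / (2 * (sc ^ 2 + sh ^ 2))) * sc
        + 2 * Ω0 * (C' / (2 * sc))) ^ 2
      + (2 * (Ω0 * (-C' - H' + σ * sD) / (2 * (sc ^ 2 + sh ^ 2))) * sh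
        + 2 * Ω0 * (H' / (2 * sh))) ^ 2
      = A * Ω0 ^ 2 := by
  have hss : sc ^ 2 + sh ^ 2 ≠ 0 := by positivity
  have hσ2 : σ ^ 2 = 1 := by rcases hσ with h | h <;> simp [h]
  have hu : (-C' - H' + σ * sD) ^ 2 + 2 * (-C' - H' + σ * sD) * (C' + H')
      = sD ^ 2 - (C' + H') ^ 2 := by linear_combination sD ^ 2 * hσ2
  have expand : (2 * (Ω0 * (-C' - H' + σ * sD) / (2 * (sc ^ 2 + sh ^ 2))) * sc
        + 2 * Ω0 * (C' / (2 * sc))) ^ 2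
      + (2 * (Ω0 * (-C' - H' + σ * sD) / (2 * (sc ^ 2 + sh ^ 2))) * sh
        + 2 * Ω0 * (H' / (2 * sh))) ^ 2
      = Ω0 ^ 2 * (((-C' - H' + σ * sD) ^ 2
          + 2 * (-C' - H' + σ * sD) * (C' + H')) / (sc ^ 2 + sh ^ 2)
        + C' ^ 2 / sc ^ 2 + H' ^ 2 / sh ^ 2) := by
    field_simp
    ring
  rw [expand, hu, hsD]
  field_simp
  ring

private lemma key_alg (A C H C' H' Ω0 σ sD sc sh : ℝ)
    (hsc : sc ≠ 0) (hsh : sh ≠ 0)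
    (hsc2 : sc ^ 2 = C) (hsh2 : sh ^ 2 = H)
    (hsD : sD ^ 2 = A * (C + H) - (C * H' - H * C') ^ 2 / (C * H))
    (hσ : σ = 1 ∨ σ = -1) :
    (2 * (Ω0 * (-C' - H' + σ * sD) / (2 * (C + H))) * sc
        + 2 * Ω0 * (C' / (2 * sc))) ^ 2
      + (2 * (Ω0 * (-C' - H' + σ * sD) / (2 * (C + H))) * sh
        + 2 * Ω0 * (H' / (2 * sh))) ^ 2
      = A * Ω0 ^ 2 := by
  subst hsc2 hsh2
  exact key_alg0 A C' H' Ω0 σ sD sc sh hsc hsh hsD hσ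

/-- The general radial conformal embedding formula for Bianchi-IX type metrics
`g = a dr² + b(σ₁²+σ₂²) + c σ₃²`: on an open interval `I`, with `h = (b−c)/4`,
`D = a(c+h) − (c h' − h c')²/(c h) ≥ 0`, and `Ω > 0` solving
`Ω' = Ω(−c' − h' + σ√D)/(2(c+h))` for a sign `σ = ±1`, the functions
`R = 2Ω√c`, `Z = 2Ω√h` satisfy `R'² + Z'² = a Ω²`. -/
theorem radial_conformal_embedding_formula
    (I : Set ℝ) (hIopen : IsOpen I) (hIinterval : I.OrdConnected)
    (a b c : ℝ → ℝ)
    (ha : ∀ r ∈ I, DifferentiableAt ℝ a r)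
    (hb : ∀ r ∈ I, DifferentiableAt ℝ b r)
    (hc : ∀ r ∈ I, DifferentiableAt ℝ c r)
    (hapos : ∀ r ∈ I, 0 < a r)
    (hcpos : ∀ r ∈ I, 0 < c r)
    (hbc : ∀ r ∈ I, c r < b r)
    (hD : ∀ r ∈ I, 0 ≤ a r * (c r + (b r - c r) / 4)
        - (c r * deriv (fun s => (b s - c s) / 4) r
            - (b r - c r) / 4 * deriv c r) ^ 2
          / (c r * ((b r - c r) / 4)))
    (σ : ℝ) (hσ : σ = 1 ∨ σ = -1)
    (Ω : ℝ → ℝ) (hΩpos : ∀ r ∈ I, 0 < Ω r)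
    (hΩ : ∀ r ∈ I, HasDerivAt Ω
      (Ω r * (-(deriv c r) - deriv (fun s => (b s - c s) / 4) r
          + σ * Real.sqrt (a r * (c r + (b r - c r) / 4)
            - (c r * deriv (fun s => (b s - c s) / 4) r
                - (b r - c r) / 4 * deriv c r) ^ 2
              / (c r * ((b r - c r) / 4))))
        / (2 * (c r + (b r - c r) / 4))) r) :
    ∀ r ∈ I,
      (deriv (fun s => 2 * Ω s * Real.sqrt (c s)) r) ^ 2
        + (deriv (fun s => 2 * Ω s * Real.sqrt ((b s - c s) / 4)) r) ^ 2
      = a r * (Ω r) ^ 2 := by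
  intro r hr
  have hcr : 0 < c r := hcpos r hr
  have hhr : 0 < (b r - c r) / 4 := by have := hbc r hr; linarith
  have hcd : HasDerivAt c (deriv c r) r := (hc r hr).hasDerivAt
  have hhdiff : DifferentiableAt ℝ (fun s => (b s - c s) / 4) r :=
    ((hb r hr).sub (hc r hr)).div_const 4
  have hhd : HasDerivAt (fun s => (b s - c s) / 4)
      (deriv (fun s => (b s - c s) / 4) r) r := hhdiff.hasDerivAt
  have hsc : HasDerivAt (fun s => Real.sqrt (c s))
      (deriv c r / (2 * Real.sqrt (c r))) r := hcd.sqrt hcr.ne'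
  have hsh : HasDerivAt (fun s => Real.sqrt ((b s - c s) / 4))
      (deriv (fun s => (b s - c s) / 4) r
        / (2 * Real.sqrt ((b r - c r) / 4))) r := hhd.sqrt hhr.ne'
  have h2Ω : HasDerivAt (fun s => 2 * Ω s)
      (2 * (Ω r * (-(deriv c r) - deriv (fun s => (b s - c s) / 4) r
          + σ * Real.sqrt (a r * (c r + (b r - c r) / 4)
            - (c r * deriv (fun s => (b s - c s) / 4) r
                - (b r - c r) / 4 * deriv c r) ^ 2
              / (c r * ((b r - c r) / 4))))
        / (2 * (c r + (b r - c r) / 4)))) r := (hΩ r hr).const_mul 2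
  have hR : HasDerivAt (fun s => 2 * Ω s * Real.sqrt (c s)) _ r := h2Ω.mul hsc
  have hZ : HasDerivAt (fun s => 2 * Ω s * Real.sqrt ((b s - c s) / 4)) _ r := h2Ω.mul hsh
  rw [hR.deriv, hZ.deriv]
  have hscne : Real.sqrt (c r) ≠ 0 := (Real.sqrt_pos.mpr hcr).ne'
  have hshne : Real.sqrt ((b r - c r) / 4) ≠ 0 := (Real.sqrt_pos.mpr hhr).ne'
  have e1 : Real.sqrt (c r) ^ 2 = c r := Real.sq_sqrt hcr.le
  have e2 : Real.sqrt ((b r - c r) / 4) ^ 2 = (b r - c r) / 4 := Real.sq_sqrt hhr.le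
  have hsD : Real.sqrt (a r * (c r + (b r - c r) / 4)
      - (c r * deriv (fun s => (b s - c s) / 4) r
          - (b r - c r) / 4 * deriv c r) ^ 2
        / (c r * ((b r - c r) / 4))) ^ 2
      = a r * (c r + (b r - c r) / 4)
      - (c r * deriv (fun s => (b s - c s) / 4) r
          - (b r - c r) / 4 * deriv c r) ^ 2
        / (c r * ((b r - c r) / 4)) := Real.sq_sqrt (hD r hr)
  have key := key_alg (a r) (c r) ((b r - c r) / 4)
    (deriv c r) (deriv (fun s => (b s - c s) / 4) r) (Ω r) σ
    (Real.sqrt (a r * (c r + (b r - c r) / 4)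
      - (c r * deriv (fun s => (b s - c s) / 4) r
          - (b r - c r) / 4 * deriv c r) ^ 2
        / (c r * ((b r - c r) / 4))))
    (Real.sqrt (c r)) (Real.sqrt ((b r - c r) / 4))
    hscne hshne e1 e2 hsD hσ
  linarith [key]
end

section
/- Let c > 0 and let t range over the set where e^{2ct} > 4c². Define w(t) = 4c²·e^{ct}/(e^{2ct} − 4c²) and u(t) = 2c·e^{2ct}/(e^{2ct} − 4c²). Then: (i) w and u are differentiable with w'(t) = −u(t)·w(t) + c·w(t) and u'(t) = −w(t)²; (ii) u(t) > w(t) > 0; (iii) the embedding condition holds: (2w'(t) − w(t)·u'(t)/u(t))² + (u'(t) − 2w(t)w'(t)/u(t) + w(t)²·u'(t)/u(t)²)²/(4(u(t)² − w(t)²)) = u(t)²·w(t)². -/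
/-- The singular-case solution `w` of the scalar-flat ASD LRS Bianchi-IX equations. -/
noncomputable def singW (c t : ℝ) : ℝ :=
  4 * c ^ 2 * Real.exp (c * t) / (Real.exp (2 * c * t) - 4 * c ^ 2)

/-- The singular-case solution `u` of the scalar-flat ASD LRS Bianchi-IX equations. -/
noncomputable def singU (c t : ℝ) : ℝ :=
  2 * c * Real.exp (2 * c * t) / (Real.exp (2 * c * t) - 4 * c ^ 2)

/-- For `c > 0`, on the region `e^{2ct} > 4c²`:
(i) `w' = −uw + cw` and `u' = −w²`; (ii) `u > w > 0`; (iii) the radial isometric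
embedding condition into flat `ℝ⁷` holds. This is the singular-case solution in the
proof that the Burns metric is, up to scale, the unique non-flat scalar-flat ASD LRS
Bianchi-IX metric admitting a radial isometric embedding in `ℝ⁷`. -/
theorem singular_case_embedding
    (c : ℝ) (hc : 0 < c) :
    ∀ t : ℝ, 4 * c ^ 2 < Real.exp (2 * c * t) →
      (HasDerivAt (singW c) (-(singU c t) * singW c t + c * singW c t) t ∧
       HasDerivAt (singU c) (-(singW c t) ^ 2) t) ∧
      (0 < singW c t ∧ singW c t < singU c t) ∧
      (2 * deriv (singW c) t - singW c t * deriv (singU c) t / singU c t) ^ 2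
        + (deriv (singU c) t - 2 * singW c t * deriv (singW c) t / singU c t
            + (singW c t) ^ 2 * deriv (singU c) t / (singU c t) ^ 2) ^ 2
          / (4 * ((singU c t) ^ 2 - (singW c t) ^ 2))
        = (singU c t) ^ 2 * (singW c t) ^ 2 := by
  intro t ht
  have hE2 : ∀ s : ℝ, Real.exp (2 * c * s) = Real.exp (c * s) ^ 2 := by
    intro s
    rw [show (2 : ℝ) * c * s = c * s + c * s by ring, Real.exp_add, sq]
  have hEpos : 0 < Real.exp (c * t) := Real.exp_pos _
  have hD : 0 < Real.exp (c * t) ^ 2 - 4 * c ^ 2 := by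
    have := ht; rw [hE2 t] at this; linarith
  have hDne : Real.exp (2 * c * t) - 4 * c ^ 2 ≠ 0 := by
    rw [hE2]; linarith
  -- derivative of exp (c * s)
  have hexp : HasDerivAt (fun s : ℝ => Real.exp (c * s)) (Real.exp (c * t) * c) t := by
    simpa using ((hasDerivAt_id t).const_mul c).exp
  have hexp2 : HasDerivAt (fun s : ℝ => Real.exp (2 * c * s)) (Real.exp (2 * c * t) * (2 * c)) t := by
    simpa using ((hasDerivAt_id t).const_mul (2 * c)).exp
  have hden : HasDerivAt (fun s : ℝ => Real.exp (2 * c * s) - 4 * c ^ 2)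
      (Real.exp (2 * c * t) * (2 * c)) t := hexp2.sub_const _
  have hnumW : HasDerivAt (fun s : ℝ => 4 * c ^ 2 * Real.exp (c * s))
      (4 * c ^ 2 * (Real.exp (c * t) * c)) t := hexp.const_mul _
  have hnumU : HasDerivAt (fun s : ℝ => 2 * c * Real.exp (2 * c * s))
      (2 * c * (Real.exp (2 * c * t) * (2 * c))) t := hexp2.const_mul _
  have hW : HasDerivAt (singW c)
      ((4 * c ^ 2 * (Real.exp (c * t) * c) * (Real.exp (2 * c * t) - 4 * c ^ 2)
        - 4 * c ^ 2 * Real.exp (c * t) * (Real.exp (2 * c * t) * (2 * c)))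
        / (Real.exp (2 * c * t) - 4 * c ^ 2) ^ 2) t := hnumW.div hden hDne
  have hU : HasDerivAt (singU c)
      ((2 * c * (Real.exp (2 * c * t) * (2 * c)) * (Real.exp (2 * c * t) - 4 * c ^ 2)
        - 2 * c * Real.exp (2 * c * t) * (Real.exp (2 * c * t) * (2 * c)))
        / (Real.exp (2 * c * t) - 4 * c ^ 2) ^ 2) t := hnumU.div hden hDne
  have hWval : (4 * c ^ 2 * (Real.exp (c * t) * c) * (Real.exp (2 * c * t) - 4 * c ^ 2)
        - 4 * c ^ 2 * Real.exp (c * t) * (Real.exp (2 * c * t) * (2 * c)))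
        / (Real.exp (2 * c * t) - 4 * c ^ 2) ^ 2
      = -(singU c t) * singW c t + c * singW c t := by
    unfold singU singW
    rw [hE2 t]
    field_simp
    ring
  have hUval : (2 * c * (Real.exp (2 * c * t) * (2 * c)) * (Real.exp (2 * c * t) - 4 * c ^ 2)
        - 2 * c * Real.exp (2 * c * t) * (Real.exp (2 * c * t) * (2 * c)))
        / (Real.exp (2 * c * t) - 4 * c ^ 2) ^ 2
      = -(singW c t) ^ 2 := by
    unfold singW
    rw [hE2 t]
    field_simp
    ring
  rw [hWval] at hW
  rw [hUval] at hU
  refine ⟨⟨hW, hU⟩, ⟨?_, ?_⟩, ?_⟩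
  · unfold singW
    rw [hE2]
    positivity
  · unfold singW singU
    rw [hE2]
    rw [div_lt_div_iff_of_pos_right hD]
    have h2c : 2 * c < Real.exp (c * t) := by
      have := (pow_lt_pow_iff_left₀ (by linarith : (0:ℝ) ≤ 2 * c) hEpos.le
        (two_ne_zero)).mp (by nlinarith)
      exact this
    nlinarith [mul_pos (mul_pos hc hEpos) (sub_pos.mpr h2c)]
  · rw [hW.deriv, hU.deriv]
    have hWpos : 0 < singW c t := by unfold singW; rw [hE2]; positivity
    have hUpos : 0 < singU c t := by unfold singU; rw [hE2]; positivity
    have hrel : singU c t ^ 2 - singW c t ^ 2 = 2 * c * singU c t := by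
      unfold singU singW
      rw [hE2]
      have hD' := hD.ne'
      rw [div_pow, div_pow, div_sub_div_same, mul_div_assoc', div_eq_div_iff (pow_ne_zero 2 hD') hD']
      ring
    set u := singU c t
    set w := singW c t
    have hune : u ≠ 0 := ne_of_gt hUpos
    have hA : 2 * (-u * w + c * w) - w * (-w ^ 2) / u = -(u * w) := by
      field_simp
      linear_combination (-1 : ℝ) * hrel
    have hB : (-w ^ 2) - 2 * w * (-u * w + c * w) / u + w ^ 2 * (-w ^ 2) / u ^ 2 = 0 := by
      field_simp
      linear_combination w ^ 2 * hrel
    rw [hA, hB]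
    simp [neg_pow]
    ring
end

section
/- For every real r, define R(r) = r/(1+r²), Z(r) = r²/(2(1+r²)), F(r) = √3/(2(1+r²)). Then: (i) R, Z, F are differentiable with (R'(r))² + (Z'(r))² + (F'(r))² = 1/(1+r²)²; (ii) R(r)² = 4·c(r) and Z(r)² = b(r) − c(r), where b(r) = r²/(4(1+r²)) and c(r) = r²/(4(1+r²)²); (iii) 2R(r)² + 4Z(r)² + (4/3)F(r)² = 1. -/
private lemma denom_pos (r : ℝ) : (0:ℝ) < 1 + r ^ 2 := by positivity

private lemma hR (r : ℝ) : HasDerivAt (fun s : ℝ => s / (1 + s ^ 2)) ((1 - r ^ 2) / (1 + r ^ 2) ^ 2) r := by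
  have h := (hasDerivAt_id r).div ((hasDerivAt_const r 1).add ((hasDerivAt_id r).pow 2)) (denom_pos r).ne'
  refine h.congr_deriv ?_
  simp only [Pi.add_apply, Pi.mul_apply, Pi.pow_apply, id]
  have := (denom_pos r).ne'
  field_simp
  ring

private lemma hZ (r : ℝ) : HasDerivAt (fun s : ℝ => s ^ 2 / (2 * (1 + s ^ 2))) (r / (1 + r ^ 2) ^ 2) r := by
  have hne : (2 * (1 + r ^ 2)) ≠ 0 := by positivity
  have h := ((hasDerivAt_id r).pow 2).div ((hasDerivAt_const r 2).mul ((hasDerivAt_const r 1).add ((hasDerivAt_id r).pow 2))) hne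
  refine h.congr_deriv ?_
  simp only [Pi.add_apply, Pi.mul_apply, Pi.pow_apply, id]
  have := (denom_pos r).ne'
  field_simp
  ring

private lemma hF (r : ℝ) : HasDerivAt (fun s : ℝ => Real.sqrt 3 / (2 * (1 + s ^ 2))) (-(Real.sqrt 3 * r) / (1 + r ^ 2) ^ 2) r := by
  have hne : (2 * (1 + r ^ 2)) ≠ 0 := by positivity
  have h := (hasDerivAt_const r (Real.sqrt 3)).div ((hasDerivAt_const r 2).mul ((hasDerivAt_const r 1).add ((hasDerivAt_id r).pow 2))) hne
  refine h.congr_deriv ?_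
  simp only [Pi.add_apply, Pi.mul_apply, Pi.pow_apply, id]
  have := (denom_pos r).ne'
  field_simp
  ring

/-- The radial isometric embedding of the Fubini–Study metric into flat `ℝ⁸`:
with `R = r/(1+r²)`, `Z = r²/(2(1+r²))`, `F = √3/(2(1+r²))`, one has
(i) `R'² + Z'² + F'² = 1/(1+r²)²`; (ii) `R² = 4c`, `Z² = b − c` with
`b = r²/(4(1+r²))`, `c = r²/(4(1+r²)²)`; (iii) `2R² + 4Z² + (4/3)F² = 1`,
so the image lies on a round seven-sphere. -/
theorem fubini_study_embedding_R8 :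
    ∀ r : ℝ,
      (DifferentiableAt ℝ (fun s : ℝ => s / (1 + s ^ 2)) r ∧
       DifferentiableAt ℝ (fun s : ℝ => s ^ 2 / (2 * (1 + s ^ 2))) r ∧
       DifferentiableAt ℝ (fun s : ℝ => Real.sqrt 3 / (2 * (1 + s ^ 2))) r ∧
       (deriv (fun s : ℝ => s / (1 + s ^ 2)) r) ^ 2
         + (deriv (fun s : ℝ => s ^ 2 / (2 * (1 + s ^ 2))) r) ^ 2
         + (deriv (fun s : ℝ => Real.sqrt 3 / (2 * (1 + s ^ 2))) r) ^ 2
         = 1 / (1 + r ^ 2) ^ 2) ∧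
      ((r / (1 + r ^ 2)) ^ 2 = 4 * (r ^ 2 / (4 * (1 + r ^ 2) ^ 2)) ∧
       (r ^ 2 / (2 * (1 + r ^ 2))) ^ 2
         = r ^ 2 / (4 * (1 + r ^ 2)) - r ^ 2 / (4 * (1 + r ^ 2) ^ 2)) ∧
      2 * (r / (1 + r ^ 2)) ^ 2 + 4 * (r ^ 2 / (2 * (1 + r ^ 2))) ^ 2
        + (4 / 3) * (Real.sqrt 3 / (2 * (1 + r ^ 2))) ^ 2 = 1 := by
  intro r
  have hden := (denom_pos r).ne'
  have hsq : Real.sqrt 3 ^ 2 = 3 := Real.sq_sqrt (by norm_num)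
  refine ⟨⟨(hR r).differentiableAt, (hZ r).differentiableAt, (hF r).differentiableAt, ?_⟩, ⟨?_, ?_⟩, ?_⟩
  · rw [(hR r).deriv, (hZ r).deriv, (hF r).deriv]
    field_simp
    nlinarith [hsq]
  · field_simp
  · field_simp
    ring
  · field_simp
    nlinarith [hsq, sq_nonneg r]
end

section
/- Let 0 < a < r. Define R(r) = √(r⁴ − a⁴)/r and Z(r) = a²/(2r). Then R and Z are differentiable and (R'(r))² + (Z'(r))² − (3a⁴/(4r⁴))·(3r⁴ + a⁴)/(r⁴ − a⁴) = (1 − a⁴/r⁴)⁻¹. Moreover R(r)² = 4·c(r) and Z(r)² = b(r) − c(r), where b(r) = r²/4 and c(r) = (r²/4)·(1 − a⁴/r⁴). -/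
/-- The radial isometric embedding of the Eguchi–Hanson metric into flat `ℝ⁸` of
signature `(7,1)`: for `0 < a < r`, with `R = √(r⁴−a⁴)/r` and `Z = a²/(2r)`,
one has `R'² + Z'² − (3a⁴/(4r⁴))(3r⁴+a⁴)/(r⁴−a⁴) = (1 − a⁴/r⁴)⁻¹`,
`R² = 4c` and `Z² = b − c`, where `b = r²/4`, `c = (r²/4)(1 − a⁴/r⁴)`. -/
theorem eguchi_hanson_embedding_R8
    (a : ℝ) (ha : 0 < a) :
    ∀ r : ℝ, a < r →
      (DifferentiableAt ℝ (fun s : ℝ => Real.sqrt (s ^ 4 - a ^ 4) / s) r ∧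
       DifferentiableAt ℝ (fun s : ℝ => a ^ 2 / (2 * s)) r ∧
       (deriv (fun s : ℝ => Real.sqrt (s ^ 4 - a ^ 4) / s) r) ^ 2
         + (deriv (fun s : ℝ => a ^ 2 / (2 * s)) r) ^ 2
         - (3 * a ^ 4 / (4 * r ^ 4)) * (3 * r ^ 4 + a ^ 4) / (r ^ 4 - a ^ 4)
         = (1 - a ^ 4 / r ^ 4)⁻¹) ∧
      (Real.sqrt (r ^ 4 - a ^ 4) / r) ^ 2
        = 4 * ((r ^ 2 / 4) * (1 - a ^ 4 / r ^ 4)) ∧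
      (a ^ 2 / (2 * r)) ^ 2
        = r ^ 2 / 4 - (r ^ 2 / 4) * (1 - a ^ 4 / r ^ 4) := by
  intro r har
  have hr : (0:ℝ) < r := ha.trans har
  have hr0 : r ≠ 0 := hr.ne'
  have hu : (0:ℝ) < r ^ 4 - a ^ 4 := by
    have h4 : a ^ 4 < r ^ 4 := pow_lt_pow_left₀ har ha.le (by norm_num)
    linarith
  have hu0 : r ^ 4 - a ^ 4 ≠ 0 := hu.ne'
  set u := r ^ 4 - a ^ 4 with hudef
  have hsq : Real.sqrt u ^ 2 = u := Real.sq_sqrt hu.le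
  have hs0 : Real.sqrt u ≠ 0 := by positivity
  -- derivative of sqrt(s^4 - a^4)
  have hinner : HasDerivAt (fun s : ℝ => s ^ 4 - a ^ 4) (4 * r ^ 3) r := by
    simpa using ((hasDerivAt_pow 4 r).sub_const (a ^ 4))
  have hsqrt : HasDerivAt (fun s : ℝ => Real.sqrt (s ^ 4 - a ^ 4))
      (1 / (2 * Real.sqrt u) * (4 * r ^ 3)) r :=
    (Real.hasDerivAt_sqrt hu0).comp r hinner
  have hR : HasDerivAt (fun s : ℝ => Real.sqrt (s ^ 4 - a ^ 4) / s)
      ((1 / (2 * Real.sqrt u) * (4 * r ^ 3) * r - Real.sqrt u * 1) / r ^ 2) r :=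
    hsqrt.div (hasDerivAt_id r) hr0
  have hZ : HasDerivAt (fun s : ℝ => a ^ 2 / (2 * s))
      ((0 * (2 * r) - a ^ 2 * 2) / (2 * r) ^ 2) r := by
    exact (hasDerivAt_const r (a ^ 2)).div (by simpa using (hasDerivAt_id r).const_mul 2) (by positivity)
  refine ⟨⟨hR.differentiableAt, hZ.differentiableAt, ?_⟩, ?_, ?_⟩
  · rw [hR.deriv, hZ.deriv]
    have hRval : (1 / (2 * Real.sqrt u) * (4 * r ^ 3) * r - Real.sqrt u * 1) / r ^ 2
        = (r ^ 4 + a ^ 4) / (r ^ 2 * Real.sqrt u) := by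
      field_simp
      linear_combination (-2) * hsq
    rw [hRval]
    have h1 : ((r ^ 4 + a ^ 4) / (r ^ 2 * Real.sqrt u)) ^ 2
        = (r ^ 4 + a ^ 4) ^ 2 / (r ^ 4 * u) := by
      rw [div_pow, mul_pow, hsq]; ring_nf
    rw [h1]
    rw [show (1 - a ^ 4 / r ^ 4)⁻¹ = r ^ 4 / u by
      rw [hudef]; field_simp]
    field_simp
    ring
  · rw [div_pow, hsq, hudef]; field_simp
  · field_simp; ring
end

section
/- Let 0 < m < r. Define R(r) = 2m·√((r−m)/(r+m)) and Z(r) = ((r−m)/2)·√((r+3m)/(r+m)). Then R and Z are differentiable and (R'(r))² + (Z'(r))² + (2mr³ + 9m²r² + 24m³r + 29m⁴)/(4(r+m)³(r+3m)) = (r+m)/(4(r−m)). Moreover R(r)² = 4·c(r) and Z(r)² = b(r) − c(r), where b(r) = (r² − m²)/4 and c(r) = m²·(r−m)/(r+m). -/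
/-- The radial isometric embedding of the anti-self-dual Taub-NUT metric into flat
Euclidean `ℝ⁸`: for `0 < m < r`, with `R = 2m√((r−m)/(r+m))` and
`Z = ((r−m)/2)√((r+3m)/(r+m))`, one has
`R'² + Z'² + (2mr³+9m²r²+24m³r+29m⁴)/(4(r+m)³(r+3m)) = (r+m)/(4(r−m))`,
`R² = 4c` and `Z² = b − c`, where `b = (r²−m²)/4`, `c = m²(r−m)/(r+m)`. -/
theorem taub_nut_embedding_R8
    (m : ℝ) (hm : 0 < m) :
    ∀ r : ℝ, m < r →
      (DifferentiableAt ℝ (fun s : ℝ => 2 * m * Real.sqrt ((s - m) / (s + m))) r ∧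
       DifferentiableAt ℝ
         (fun s : ℝ => ((s - m) / 2) * Real.sqrt ((s + 3 * m) / (s + m))) r ∧
       (deriv (fun s : ℝ => 2 * m * Real.sqrt ((s - m) / (s + m))) r) ^ 2
         + (deriv (fun s : ℝ =>
             ((s - m) / 2) * Real.sqrt ((s + 3 * m) / (s + m))) r) ^ 2
         + (2 * m * r ^ 3 + 9 * m ^ 2 * r ^ 2 + 24 * m ^ 3 * r + 29 * m ^ 4)
             / (4 * (r + m) ^ 3 * (r + 3 * m))
         = (r + m) / (4 * (r - m))) ∧
      (2 * m * Real.sqrt ((r - m) / (r + m))) ^ 2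
        = 4 * (m ^ 2 * (r - m) / (r + m)) ∧
      (((r - m) / 2) * Real.sqrt ((r + 3 * m) / (r + m))) ^ 2
        = (r ^ 2 - m ^ 2) / 4 - m ^ 2 * (r - m) / (r + m) := by
  intro r hr
  have hrm : (0:ℝ) < r - m := by linarith
  have hrp : (0:ℝ) < r + m := by linarith
  have hr3 : (0:ℝ) < r + 3 * m := by linarith
  set u := Real.sqrt ((r - m) / (r + m)) with hu
  set v := Real.sqrt ((r + 3 * m) / (r + m)) with hv
  have hupos : 0 < u := Real.sqrt_pos.2 (div_pos hrm hrp)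
  have hvpos : 0 < v := Real.sqrt_pos.2 (div_pos hr3 hrp)
  have hu2 : u ^ 2 = (r - m) / (r + m) := Real.sq_sqrt (div_pos hrm hrp).le
  have hv2 : v ^ 2 = (r + 3 * m) / (r + m) := Real.sq_sqrt (div_pos hr3 hrp).le
  -- derivative of the inner rational functions
  have hg : HasDerivAt (fun s : ℝ => (s - m) / (s + m))
      ((1 * (r + m) - (r - m) * 1) / (r + m) ^ 2) r :=
    ((hasDerivAt_id r).sub_const m).div ((hasDerivAt_id r).add_const m) hrp.ne'
  have hh : HasDerivAt (fun s : ℝ => (s + 3 * m) / (s + m))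
      ((1 * (r + m) - (r + 3 * m) * 1) / (r + m) ^ 2) r :=
    ((hasDerivAt_id r).add_const (3 * m)).div ((hasDerivAt_id r).add_const m) hrp.ne'
  have hgs : HasDerivAt (fun s : ℝ => Real.sqrt ((s - m) / (s + m)))
      (((1 * (r + m) - (r - m) * 1) / (r + m) ^ 2) / (2 * u)) r := by
    have := hg.sqrt (div_pos hrm hrp).ne'
    rw [← hu] at this
    exact this
  have hhs : HasDerivAt (fun s : ℝ => Real.sqrt ((s + 3 * m) / (s + m)))
      (((1 * (r + m) - (r + 3 * m) * 1) / (r + m) ^ 2) / (2 * v)) r := by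
    have := hh.sqrt (div_pos hr3 hrp).ne'
    rw [← hv] at this
    exact this
  have hR : HasDerivAt (fun s : ℝ => 2 * m * Real.sqrt ((s - m) / (s + m)))
      (2 * m * (((1 * (r + m) - (r - m) * 1) / (r + m) ^ 2) / (2 * u))) r :=
    hgs.const_mul (2 * m)
  have hlin : HasDerivAt (fun s : ℝ => (s - m) / 2) (1 / 2) r := by
    simpa using ((hasDerivAt_id r).sub_const m).div_const 2
  have hZ : HasDerivAt (fun s : ℝ => ((s - m) / 2) * Real.sqrt ((s + 3 * m) / (s + m)))
      (1 / 2 * v + ((r - m) / 2) *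
        (((1 * (r + m) - (r + 3 * m) * 1) / (r + m) ^ 2) / (2 * v))) r := by
    have := hlin.mul hhs
    rw [← hv] at this
    exact this
  have hDR : deriv (fun s : ℝ => 2 * m * Real.sqrt ((s - m) / (s + m))) r
      = 2 * m * (((1 * (r + m) - (r - m) * 1) / (r + m) ^ 2) / (2 * u)) := hR.deriv
  have hDZ : deriv (fun s : ℝ => ((s - m) / 2) * Real.sqrt ((s + 3 * m) / (s + m))) r
      = 1 / 2 * v + ((r - m) / 2) *
        (((1 * (r + m) - (r + 3 * m) * 1) / (r + m) ^ 2) / (2 * v)) := hZ.deriv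
  have hR2 : (deriv (fun s : ℝ => 2 * m * Real.sqrt ((s - m) / (s + m))) r) ^ 2
      = 4 * m ^ 4 / ((r + m) ^ 3 * (r - m)) := by
    rw [hDR]
    have e1 : (2 * m * (((1 * (r + m) - (r - m) * 1) / (r + m) ^ 2) / (2 * u))) ^ 2
        = (m * ((1 * (r + m) - (r - m) * 1) / (r + m) ^ 2)) ^ 2 / u ^ 2 := by
      field_simp
    rw [e1, hu2]
    field_simp
    ring
  have hZ2 : (deriv (fun s : ℝ =>
        ((s - m) / 2) * Real.sqrt ((s + 3 * m) / (s + m))) r) ^ 2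
      = (r ^ 2 + 3 * m * r + 4 * m ^ 2) ^ 2 / (4 * (r + m) ^ 3 * (r + 3 * m)) := by
    rw [hDZ]
    have e1 : (1 / 2 * v + ((r - m) / 2) *
          (((1 * (r + m) - (r + 3 * m) * 1) / (r + m) ^ 2) / (2 * v))) ^ 2
        = v ^ 2 / 4
          + (r - m) * ((1 * (r + m) - (r + 3 * m) * 1) / (r + m) ^ 2) / 4
          + ((r - m) * ((1 * (r + m) - (r + 3 * m) * 1) / (r + m) ^ 2)) ^ 2
              / (16 * v ^ 2) := by
      field_simp
      ring
    rw [e1, hv2]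
    field_simp
    ring
  refine ⟨⟨hR.differentiableAt, hZ.differentiableAt, ?_⟩, ?_, ?_⟩
  · rw [hR2, hZ2]
    have d1 : (r + m) ^ 3 * (r - m) ≠ 0 := by positivity
    have d2 : 4 * (r + m) ^ 3 * (r + 3 * m) ≠ 0 := by positivity
    have d3 : 4 * (r - m) ≠ 0 := by positivity
    rw [div_add_div _ _ d1 d2, div_add_div _ _ (mul_ne_zero d1 d2) d2,
      div_eq_div_iff (mul_ne_zero (mul_ne_zero d1 d2) d2) d3]
    ring
  · have e : (2 * m * u) ^ 2 = 4 * m ^ 2 * u ^ 2 := by ring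
    rw [e, hu2]
    ring
  · have e : (((r - m) / 2) * v) ^ 2 = (r - m) ^ 2 / 4 * v ^ 2 := by ring
    rw [e, hv2]
    field_simp
    ring
end
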